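/- arXiv:2010.09779 — 8 statements merged into one kernel-verified Lean document; each statement's English description precedes it below -/
import Mathlib

section
/- Let u, a, b, y be as in the Painlevé II system below, and assume y(x,w) > 0 for all (x,w). For (x,t,r) ∈ ℝ × (0,∞) × ℝ set s = t^(-1/3)·r + t^(-4/3)·x^2, φ_gue(x,t,r) = −t^(-2/3)·u(s)^2, and ψ(x,t,r) = ∂_r^2[ log y(s, t^(-2/3)·x/2) ]. Then ψ satisfies the (r-differentiated) modified KP equation: ∂_r( ∂_t ψ + ψ·∂_r ψ + (1/12)·∂_r^3 ψ + φ_gue·∂_r ψ + ψ·∂_r φ_gue ) + (1/4)·∂_x^2 ψ = 0 at every point of ℝ × (0,∞) × ℝ. -/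
open Real Filter Topology

/-- The left-hand side of the (r-differentiated) KP equation
`∂_r(∂_t φ + φ·∂_r φ + (1/12)·∂_r³ φ) + (1/4)·∂_x² φ` for `φ = φ x t r`. -/
noncomputable def kpDiff (φ : ℝ → ℝ → ℝ → ℝ) (x t r : ℝ) : ℝ :=
  deriv (fun r' => deriv (fun t' => φ x t' r') t
      + φ x t r' * deriv (fun s => φ x t s) r'
      + (1/12) * iteratedDeriv 3 (fun s => φ x t s) r') r
    + (1/4) * iteratedDeriv 2 (fun x' => φ x' t r) x

/-- The left-hand side of the (r-differentiated) modified KP equation with coefficient `φ`: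
`∂_r(∂_t ψ + ψ·∂_r ψ + (1/12)·∂_r³ ψ + φ·∂_r ψ + ψ·∂_r φ) + (1/4)·∂_x² ψ`. -/
noncomputable def kpModDiff (φ ψ : ℝ → ℝ → ℝ → ℝ) (x t r : ℝ) : ℝ :=
  deriv (fun r' => deriv (fun t' => ψ x t' r') t
      + ψ x t r' * deriv (fun s => ψ x t s) r'
      + (1/12) * iteratedDeriv 3 (fun s => ψ x t s) r'
      + φ x t r' * deriv (fun s => ψ x t s) r'
      + ψ x t r' * deriv (fun s => φ x t s) r') r
    + (1/4) * iteratedDeriv 2 (fun x' => ψ x' t r) x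

theorem hda_congr {f : ℝ → ℝ} {v w x : ℝ} (h : HasDerivAt f v x) (e : v = w) :
    HasDerivAt f w x := e ▸ h

theorem itd2 (f : ℝ → ℝ) : iteratedDeriv 2 f = deriv (deriv f) := by
  rw [show (2:ℕ) = 1 + 1 from rfl, iteratedDeriv_succ, show (1:ℕ) = 0 + 1 from rfl,
    iteratedDeriv_succ, iteratedDeriv_zero]

theorem itd3 (f : ℝ → ℝ) : iteratedDeriv 3 f = deriv (deriv (deriv f)) := by
  rw [show (3:ℕ) = 2 + 1 from rfl, iteratedDeriv_succ, itd2]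

theorem comp_affine1 {G : ℝ → ℝ} {Gx : ℝ → ℝ} (hG : ∀ X, HasDerivAt G (Gx X) X)
    (cc d R' : ℝ) :
    HasDerivAt (fun s => G (cc * s + d)) (Gx (cc * R' + d) * cc) R' := by
  have h := (hG (cc * R' + d)).comp R' (((hasDerivAt_id R').const_mul cc).add_const d)
  simpa [Function.comp_def] using h

theorem comp_affine {G Gx : ℝ → ℝ → ℝ} (hG : ∀ X W, HasDerivAt (fun x' => G x' W) (Gx X W) X)
    (W cc d R' : ℝ) :
    HasDerivAt (fun s => G (cc * s + d) W) (Gx (cc * R' + d) W * cc) R' := by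
  have h := (hG (cc * R' + d) W).comp R' (((hasDerivAt_id R').const_mul cc).add_const d)
  simpa [Function.comp_def] using h

theorem chain2 {G Gx Gw : ℝ → ℝ → ℝ}
    (hGj : Differentiable ℝ (fun z : ℝ × ℝ => G z.1 z.2))
    (hGx : ∀ X W, HasDerivAt (fun x' => G x' W) (Gx X W) X)
    (hGw : ∀ X W, HasDerivAt (fun w' => G X w') (Gw X W) W)
    {σ ω : ℝ → ℝ} {σ' ω' : ℝ} {t : ℝ} (hσ : HasDerivAt σ σ' t) (hω : HasDerivAt ω ω' t) :
    HasDerivAt (fun t' => G (σ t') (ω t'))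
      (Gx (σ t) (ω t) * σ' + Gw (σ t) (ω t) * ω') t := by
  have hFD := (hGj (σ t, ω t)).hasFDerivAt
  set L := fderiv ℝ (fun z : ℝ × ℝ => G z.1 z.2) (σ t, ω t) with hL
  have h1 : HasDerivAt (fun x' => G x' (ω t)) (L (1, 0)) (σ t) := by
    have := hFD.comp_hasDerivAt (σ t) ((hasDerivAt_id (σ t)).prodMk (hasDerivAt_const (σ t) (ω t)))
    simpa [Function.comp_def] using this
  have h2 : HasDerivAt (fun w' => G (σ t) w') (L (0, 1)) (ω t) := by
    have := hFD.comp_hasDerivAt (ω t) ((hasDerivAt_const (ω t) (σ t)).prodMk (hasDerivAt_id (ω t)))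
    simpa [Function.comp_def] using this
  have e1 : L (1, 0) = Gx (σ t) (ω t) := h1.unique (hGx (σ t) (ω t))
  have e2 : L (0, 1) = Gw (σ t) (ω t) := h2.unique (hGw (σ t) (ω t))
  have h := hFD.comp_hasDerivAt t (hσ.prodMk hω)
  have e3 : L (σ', ω') = Gx (σ t) (ω t) * σ' + Gw (σ t) (ω t) * ω' := by
    have e4 : ((σ' : ℝ), (ω' : ℝ)) = σ' • ((1:ℝ), (0:ℝ)) + ω' • ((0:ℝ), (1:ℝ)) := by
      simp [Prod.ext_iff]
    rw [e4, map_add, map_smul, map_smul, e1, e2, smul_eq_mul, smul_eq_mul]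
    ring
  exact e3 ▸ h

set_option maxHeartbeats 4000000 in
/-- ψ(x,t,r) = ∂_r²[log y(s, t^{-2/3}x/2)] with s = t^{-1/3}r + t^{-4/3}x² satisfies the (r-differentiated) modified KP equation with coefficient φ_gue(x,t,r) = −t^{-2/3}·u(s)² on ℝ × (0,∞) × ℝ. -/
theorem baikRains_g_solves_modifiedKP
    (u : ℝ → ℝ) (a b y : ℝ → ℝ → ℝ)
    (hu : ContDiff ℝ (⊤ : ℕ∞) u)
    (hP2 : ∀ x : ℝ, deriv (deriv u) x = 2 * u x ^ 3 + x * u x)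
    (ha : ContDiff ℝ (⊤ : ℕ∞) (fun p : ℝ × ℝ => a p.1 p.2))
    (hb : ContDiff ℝ (⊤ : ℕ∞) (fun p : ℝ × ℝ => b p.1 p.2))
    (hax : ∀ x w : ℝ, deriv (fun x' => a x' w) x = u x * b x w)
    (hbx : ∀ x w : ℝ, deriv (fun x' => b x' w) x = u x * a x w - 2 * w * b x w)
    (haw : ∀ x w : ℝ, deriv (fun w' => a x w') w
      = 2 * u x ^ 2 * a x w - (4 * w * u x + 2 * deriv u x) * b x w)
    (hbw : ∀ x w : ℝ, deriv (fun w' => b x w') w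
      = (-(4 * w * u x) + 2 * deriv u x) * a x w
        + (8 * w ^ 2 - 2 * x - 2 * u x ^ 2) * b x w)
    (hab : ∀ x w : ℝ, a x w = -b x (-w) * Real.exp (8 * w ^ 3 / 3 - 2 * w * x))
    (hba : ∀ x w : ℝ, b x w = -a x (-w) * Real.exp (8 * w ^ 3 / 3 - 2 * w * x))
    (hy : ∀ x w : ℝ, y x w
      = (2 * u x ^ 2 + x - 4 * w ^ 2) * a x w * a x (-w)
        - (deriv u x + 2 * w * u x) * b x w * a x (-w)
        - (deriv u x - 2 * w * u x) * a x w * b x (-w))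
    (hypos : ∀ x w : ℝ, 0 < y x w) :
    ∀ x t r : ℝ, 0 < t →
      kpModDiff
        (fun x t r =>
          -(t ^ (-(2:ℝ)/3)) * u (t ^ (-(1:ℝ)/3) * r + t ^ (-(4:ℝ)/3) * x ^ 2) ^ 2)
        (fun x t r =>
          iteratedDeriv 2 (fun r' =>
            Real.log (y (t ^ (-(1:ℝ)/3) * r' + t ^ (-(4:ℝ)/3) * x ^ 2)
              (t ^ (-(2:ℝ)/3) * x / 2))) r) x t r = 0 := by
  intro x t r ht
  have hy0 : ∀ X W : ℝ, y X W ≠ 0 := fun X W => ne_of_gt (hypos X W)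
  have hud : Differentiable ℝ u := hu.differentiable (by simp)
  have hUx : ∀ X : ℝ, HasDerivAt u (deriv u X) X := fun X => (hud X).hasDerivAt
  have hVC : ContDiff ℝ (⊤ : ℕ∞) (deriv u) := (contDiff_infty_iff_deriv.mp hu).2
  have hVd : Differentiable ℝ (deriv u) := hVC.differentiable (by simp)
  have hVx : ∀ X : ℝ, HasDerivAt (deriv u) (2 * u X ^ 3 + X * u X) X := fun X =>
    hP2 X ▸ (hVd X).hasDerivAt
  have haj : Differentiable ℝ (fun z : ℝ × ℝ => a z.1 z.2) :=
    ha.differentiable (by simp)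
  have hbj : Differentiable ℝ (fun z : ℝ × ℝ => b z.1 z.2) :=
    hb.differentiable (by simp)
  have hadx : ∀ X W : ℝ, DifferentiableAt ℝ (fun x' => a x' W) X := by
    intro X W
    have h := DifferentiableAt.comp X (haj (X, W))
      ((differentiableAt_id.prodMk (differentiableAt_const W)) :
        DifferentiableAt ℝ (fun x' : ℝ => (x', W)) X)
    exact h
  have hadw : ∀ X W : ℝ, DifferentiableAt ℝ (fun w' => a X w') W := by
    intro X W
    have h := DifferentiableAt.comp W (haj (X, W))
      (((differentiableAt_const X).prodMk differentiableAt_id) :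
        DifferentiableAt ℝ (fun w' : ℝ => (X, w')) W)
    exact h
  have hbdx : ∀ X W : ℝ, DifferentiableAt ℝ (fun x' => b x' W) X := by
    intro X W
    have h := DifferentiableAt.comp X (hbj (X, W))
      ((differentiableAt_id.prodMk (differentiableAt_const W)) :
        DifferentiableAt ℝ (fun x' : ℝ => (x', W)) X)
    exact h
  have hbdw : ∀ X W : ℝ, DifferentiableAt ℝ (fun w' => b X w') W := by
    intro X W
    have h := DifferentiableAt.comp W (hbj (X, W))
      (((differentiableAt_const X).prodMk differentiableAt_id) :
        DifferentiableAt ℝ (fun w' : ℝ => (X, w')) W)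
    exact h
  have haX : ∀ X W : ℝ, HasDerivAt (fun x' => a x' W) (u X * b X W) X := fun X W =>
    hax X W ▸ (hadx X W).hasDerivAt
  have hbX : ∀ X W : ℝ, HasDerivAt (fun x' => b x' W) (u X * a X W - 2 * W * b X W) X :=
    fun X W => hbx X W ▸ (hbdx X W).hasDerivAt
  have haW : ∀ X W : ℝ, HasDerivAt (fun w' => a X w')
      (2 * u X ^ 2 * a X W - (4 * W * u X + 2 * deriv u X) * b X W) W := fun X W =>
    haw X W ▸ (hadw X W).hasDerivAt
  have hbW : ∀ X W : ℝ, HasDerivAt (fun w' => b X w')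
      ((-(4 * W * u X) + 2 * deriv u X) * a X W
        + (8 * W ^ 2 - 2 * X - 2 * u X ^ 2) * b X W) W := fun X W =>
    hbw X W ▸ (hbdw X W).hasDerivAt
  have haWn : ∀ X W : ℝ, HasDerivAt (fun w' => a X (-w'))
      (-(2 * u X ^ 2 * a X (-W) - (4 * (-W) * u X + 2 * deriv u X) * b X (-W))) W := by
    intro X W
    have h := (haW X (-W)).comp W (hasDerivAt_neg W)
    simpa [Function.comp_def] using h
  have hbWn : ∀ X W : ℝ, HasDerivAt (fun w' => b X (-w'))
      (-((-(4 * (-W) * u X) + 2 * deriv u X) * a X (-W)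
        + (8 * (-W) ^ 2 - 2 * X - 2 * u X ^ 2) * b X (-W))) W := by
    intro X W
    have h := (hbW X (-W)).comp W (hasDerivAt_neg W)
    simpa [Function.comp_def] using h
  have hQP : ∀ X W : ℝ, b X W * b X (-W) = a X W * a X (-W) := by
    intro X W
    have h1 := hab X W
    have h2 := hab X (-W)
    rw [neg_neg] at h2
    rw [h1, h2]
    rw [show (-b X (-W) * Real.exp (8 * W ^ 3 / 3 - 2 * W * X)) *
        (-b X W * Real.exp (8 * (-W) ^ 3 / 3 - 2 * (-W) * X))
        = b X W * b X (-W) * (Real.exp (8 * W ^ 3 / 3 - 2 * W * X) *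
          Real.exp (8 * (-W) ^ 3 / 3 - 2 * (-W) * X)) from by ring,
      ← Real.exp_add,
      show (8 * W ^ 3 / 3 - 2 * W * X) + (8 * (-W) ^ 3 / 3 - 2 * (-W) * X) = 0 from by ring,
      Real.exp_zero, mul_one]
  have hyX : ∀ X W : ℝ, HasDerivAt (fun x' => y x' W)
      ((1 + 2 * u X * deriv u X) * (a X W * a X (-W))
        - 2 * u X * deriv u X * (b X W * b X (-W))) X := by
    intro X W
    have hfe : (fun x' => y x' W) = fun x' =>
        (2 * u x' ^ 2 + x' - 4 * W ^ 2) * a x' W * a x' (-W)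
        - (deriv u x' + 2 * W * u x') * b x' W * a x' (-W)
        - (deriv u x' - 2 * W * u x') * a x' W * b x' (-W) := funext fun x' => hy x' W
    rw [hfe]
    have t1 := ((((((hUx X).pow 2).const_mul 2).add (hasDerivAt_id' X)).sub_const
        (4 * W ^ 2)).mul (haX X W)).mul (haX X (-W))
    have t2 := (((hVx X).add ((hUx X).const_mul (2 * W))).mul (hbX X W)).mul (haX X (-W))
    have t3 := (((hVx X).sub ((hUx X).const_mul (2 * W))).mul (haX X W)).mul (hbX X (-W))
    exact hda_congr ((t1.sub t2).sub t3) (by simp only [Pi.add_apply, Pi.sub_apply, Pi.mul_apply, Pi.pow_apply, Pi.neg_apply, id]; ring)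
  have hyW : ∀ X W : ℝ, HasDerivAt (fun w' => y X w')
      (-(8 * W) * (a X W * a X (-W)) - 2 * u X * (b X W * a X (-W))
        + 2 * u X * (a X W * b X (-W))) W := by
    intro X W
    have hfe : (fun w' => y X w') = fun w' =>
        (2 * u X ^ 2 + X - 4 * w' ^ 2) * a X w' * a X (-w')
        - (deriv u X + 2 * w' * u X) * b X w' * a X (-w')
        - (deriv u X - 2 * w' * u X) * a X w' * b X (-w') := funext fun w' => hy X w'
    rw [hfe]
    have t1 := (((hasDerivAt_const W (2 * u X ^ 2 + X)).sub
        (((hasDerivAt_id' W).pow 2).const_mul 4)).mul (haW X W)).mul (haWn X W)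
    have t2 := (((hasDerivAt_const W (deriv u X)).add
        (((hasDerivAt_id' W).const_mul 2).mul_const (u X))).mul (hbW X W)).mul (haWn X W)
    have t3 := (((hasDerivAt_const W (deriv u X)).sub
        (((hasDerivAt_id' W).const_mul 2).mul_const (u X))).mul (haW X W)).mul (hbWn X W)
    exact hda_congr ((t1.sub t2).sub t3) (by simp only [Pi.add_apply, Pi.sub_apply, Pi.mul_apply, Pi.pow_apply, Pi.neg_apply, id]; ring)
  obtain ⟨p, hpdef⟩ : (∃ f : ℝ → ℝ → ℝ, f = fun X W => a X W * a X (-W) / y X W) := ⟨_, rfl⟩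
  obtain ⟨q, hqdef⟩ : (∃ f : ℝ → ℝ → ℝ, f = fun X W => b X W * b X (-W) / y X W) := ⟨_, rfl⟩
  obtain ⟨m, hmdef⟩ : (∃ f : ℝ → ℝ → ℝ, f = fun X W => b X W * a X (-W) / y X W) := ⟨_, rfl⟩
  obtain ⟨n, hndef⟩ : (∃ f : ℝ → ℝ → ℝ, f = fun X W => a X W * b X (-W) / y X W) := ⟨_, rfl⟩
  have hqp : ∀ X W : ℝ, q X W = p X W := by
    intro X W
    simp only [hpdef, hqdef]
    rw [hQP X W]
  have hRS : ∀ X W : ℝ, m X W * n X W = p X W * q X W := by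
    intro X W
    simp only [hpdef, hqdef, hmdef, hndef]
    ring
  have hRSc : ∀ X W : ℝ, m X W * n X W = p X W ^ 2 := by
    intro X W
    linear_combination hRS X W + p X W * hqp X W
  have hYp : ∀ X W : ℝ, (2 * u X ^ 2 + X - 4 * W ^ 2) * p X W
      - (deriv u X + 2 * W * u X) * m X W - (deriv u X - 2 * W * u X) * n X W = 1 := by
    intro X W
    simp only [hpdef, hmdef, hndef]
    have h0 := hy0 X W
    field_simp
    linear_combination -hy X W
  have hpXr : ∀ X W : ℝ, HasDerivAt (fun x' => p x' W)
      ((-1 : ℝ) * ((p X W) ^ 2) + (1 : ℝ) * (u X * n X W) + (1 : ℝ) * (u X * m X W) + (2 : ℝ) * (u X * deriv u X * p X W * q X W) + (-2 : ℝ) * (u X * deriv u X * (p X W) ^ 2)) X := by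
    intro X W
    simp only [hpdef, hqdef, hmdef, hndef]
    refine hda_congr (((haX X W).mul (haX X (-W))).div (hyX X W) (hy0 X W)) ?_
    have h0 := hy0 X W
    simp only [Pi.add_apply, Pi.sub_apply, Pi.mul_apply, Pi.pow_apply, Pi.neg_apply, id]
    field_simp
    ring
  have hpWr : ∀ X W : ℝ, HasDerivAt (fun w' => p X w')
      ((2 : ℝ) * (deriv u X * n X W) + (-2 : ℝ) * (deriv u X * m X W) + (-2 : ℝ) * (u X * p X W * n X W) + (2 : ℝ) * (u X * p X W * m X W) + (8 : ℝ) * (W * (p X W) ^ 2) + (-4 : ℝ) * (W * u X * n X W) + (-4 : ℝ) * (W * u X * m X W)) W := by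
    intro X W
    simp only [hpdef, hqdef, hmdef, hndef]
    refine hda_congr (((haW X W).mul (haWn X W)).div (hyW X W) (hy0 X W)) ?_
    have h0 := hy0 X W
    simp only [Pi.add_apply, Pi.sub_apply, Pi.mul_apply, Pi.pow_apply, Pi.neg_apply, id]
    field_simp
    ring
  have hmXr : ∀ X W : ℝ, HasDerivAt (fun x' => m x' W)
      ((-1 : ℝ) * (p X W * m X W) + (1 : ℝ) * (u X * q X W) + (1 : ℝ) * (u X * p X W) + (2 : ℝ) * (u X * deriv u X * q X W * m X W) + (-2 : ℝ) * (u X * deriv u X * p X W * m X W) + (-2 : ℝ) * (W * m X W)) X := by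
    intro X W
    simp only [hpdef, hqdef, hmdef, hndef]
    refine hda_congr (((hbX X W).mul (haX X (-W))).div (hyX X W) (hy0 X W)) ?_
    have h0 := hy0 X W
    simp only [Pi.add_apply, Pi.sub_apply, Pi.mul_apply, Pi.pow_apply, Pi.neg_apply, id]
    field_simp
    ring
  have hmWr : ∀ X W : ℝ, HasDerivAt (fun w' => m X w')
      ((2 : ℝ) * (deriv u X * q X W) + (2 : ℝ) * (deriv u X * p X W) + (-2 : ℝ) * (u X * m X W * n X W) + (2 : ℝ) * (u X * (m X W) ^ 2) + (-4 : ℝ) * ((u X) ^ 2 * m X W) + (8 : ℝ) * (W * p X W * m X W) + (-4 : ℝ) * (W * u X * q X W) + (-4 : ℝ) * (W * u X * p X W) + (8 : ℝ) * (W ^ 2 * m X W) + (-2 : ℝ) * (X * m X W)) W := by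
    intro X W
    simp only [hpdef, hqdef, hmdef, hndef]
    refine hda_congr (((hbW X W).mul (haWn X W)).div (hyW X W) (hy0 X W)) ?_
    have h0 := hy0 X W
    simp only [Pi.add_apply, Pi.sub_apply, Pi.mul_apply, Pi.pow_apply, Pi.neg_apply, id]
    field_simp
    ring
  have hnXr : ∀ X W : ℝ, HasDerivAt (fun x' => n x' W)
      ((-1 : ℝ) * (p X W * n X W) + (1 : ℝ) * (u X * q X W) + (1 : ℝ) * (u X * p X W) + (2 : ℝ) * (u X * deriv u X * q X W * n X W) + (-2 : ℝ) * (u X * deriv u X * p X W * n X W) + (2 : ℝ) * (W * n X W)) X := by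
    intro X W
    simp only [hpdef, hqdef, hmdef, hndef]
    refine hda_congr (((haX X W).mul (hbX X (-W))).div (hyX X W) (hy0 X W)) ?_
    have h0 := hy0 X W
    simp only [Pi.add_apply, Pi.sub_apply, Pi.mul_apply, Pi.pow_apply, Pi.neg_apply, id]
    field_simp
    ring
  have hnWr : ∀ X W : ℝ, HasDerivAt (fun w' => n X w')
      ((-2 : ℝ) * (deriv u X * q X W) + (-2 : ℝ) * (deriv u X * p X W) + (-2 : ℝ) * (u X * (n X W) ^ 2) + (2 : ℝ) * (u X * m X W * n X W) + (4 : ℝ) * ((u X) ^ 2 * n X W) + (8 : ℝ) * (W * p X W * n X W) + (-4 : ℝ) * (W * u X * q X W) + (-4 : ℝ) * (W * u X * p X W) + (-8 : ℝ) * (W ^ 2 * n X W) + (2 : ℝ) * (X * n X W)) W := by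
    intro X W
    simp only [hpdef, hqdef, hmdef, hndef]
    refine hda_congr (((haW X W).mul (hbWn X W)).div (hyW X W) (hy0 X W)) ?_
    have h0 := hy0 X W
    simp only [Pi.add_apply, Pi.sub_apply, Pi.mul_apply, Pi.pow_apply, Pi.neg_apply, id]
    field_simp
    ring
  have hpX : ∀ X W : ℝ, HasDerivAt (fun x' => p x' W)
      ((-1 : ℝ) * ((p X W) ^ 2) + (1 : ℝ) * (u X * n X W) + (1 : ℝ) * (u X * m X W)) X := by
    intro X W
    exact hda_congr (hpXr X W) (by linear_combination ((2 : ℝ) * (u X * deriv u X * p X W)) * hqp X W)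
  have hpW : ∀ X W : ℝ, HasDerivAt (fun w' => p X w')
      ((2 : ℝ) * (deriv u X * n X W) + (-2 : ℝ) * (deriv u X * m X W) + (-2 : ℝ) * (u X * p X W * n X W) + (2 : ℝ) * (u X * p X W * m X W) + (8 : ℝ) * (W * (p X W) ^ 2) + (-4 : ℝ) * (W * u X * n X W) + (-4 : ℝ) * (W * u X * m X W)) W := by
    intro X W
    exact hda_congr (hpWr X W) (by ring)
  have hmX : ∀ X W : ℝ, HasDerivAt (fun x' => m x' W)
      ((-1 : ℝ) * (p X W * m X W) + (2 : ℝ) * (u X * p X W) + (-2 : ℝ) * (W * m X W)) X := by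
    intro X W
    exact hda_congr (hmXr X W) (by linear_combination ((1 : ℝ) * (u X) + (2 : ℝ) * (u X * deriv u X * m X W)) * hqp X W)
  have hmW : ∀ X W : ℝ, HasDerivAt (fun w' => m X w')
      ((4 : ℝ) * (deriv u X * p X W) + (-2 : ℝ) * (u X * m X W * n X W) + (2 : ℝ) * (u X * (m X W) ^ 2) + (-4 : ℝ) * ((u X) ^ 2 * m X W) + (8 : ℝ) * (W * p X W * m X W) + (-8 : ℝ) * (W * u X * p X W) + (8 : ℝ) * (W ^ 2 * m X W) + (-2 : ℝ) * (X * m X W)) W := by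
    intro X W
    exact hda_congr (hmWr X W) (by linear_combination ((2 : ℝ) * (deriv u X) + (-4 : ℝ) * (W * u X)) * hqp X W)
  have hnX : ∀ X W : ℝ, HasDerivAt (fun x' => n x' W)
      ((-1 : ℝ) * (p X W * n X W) + (2 : ℝ) * (u X * p X W) + (2 : ℝ) * (W * n X W)) X := by
    intro X W
    exact hda_congr (hnXr X W) (by linear_combination ((1 : ℝ) * (u X) + (2 : ℝ) * (u X * deriv u X * n X W)) * hqp X W)
  have hnW : ∀ X W : ℝ, HasDerivAt (fun w' => n X w')
      ((-4 : ℝ) * (deriv u X * p X W) + (-2 : ℝ) * (u X * (n X W) ^ 2) + (2 : ℝ) * (u X * m X W * n X W) + (4 : ℝ) * ((u X) ^ 2 * n X W) + (8 : ℝ) * (W * p X W * n X W) + (-8 : ℝ) * (W * u X * p X W) + (-8 : ℝ) * (W ^ 2 * n X W) + (2 : ℝ) * (X * n X W)) W := by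
    intro X W
    exact hda_congr (hnWr X W) (by linear_combination ((-2 : ℝ) * (deriv u X) + (-4 : ℝ) * (W * u X)) * hqp X W)
  have hyfe : (fun z : ℝ × ℝ => y z.1 z.2) = fun z : ℝ × ℝ =>
      (2 * u z.1 ^ 2 + z.1 - 4 * z.2 ^ 2) * a z.1 z.2 * a z.1 (-z.2)
      - (deriv u z.1 + 2 * z.2 * u z.1) * b z.1 z.2 * a z.1 (-z.2)
      - (deriv u z.1 - 2 * z.2 * u z.1) * a z.1 z.2 * b z.1 (-z.2) :=
    funext fun z => hy z.1 z.2
  have hyj : Differentiable ℝ (fun z : ℝ × ℝ => y z.1 z.2) := by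
    rw [hyfe]; fun_prop
  have hpj : Differentiable ℝ (fun z : ℝ × ℝ => p z.1 z.2) := by
    simp only [hpdef]
    have hnum : Differentiable ℝ (fun z : ℝ × ℝ => a z.1 z.2 * a z.1 (-z.2)) := by fun_prop
    have hinv : Differentiable ℝ (fun z : ℝ × ℝ => (y z.1 z.2)⁻¹) :=
      fun z => (hyj z).inv (hy0 z.1 z.2)
    have h2 := hnum.mul hinv
    simpa [div_eq_mul_inv, Pi.mul_def] using h2
  have hmj : Differentiable ℝ (fun z : ℝ × ℝ => m z.1 z.2) := by
    simp only [hmdef]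
    have hnum : Differentiable ℝ (fun z : ℝ × ℝ => b z.1 z.2 * a z.1 (-z.2)) := by fun_prop
    have hinv : Differentiable ℝ (fun z : ℝ × ℝ => (y z.1 z.2)⁻¹) :=
      fun z => (hyj z).inv (hy0 z.1 z.2)
    have h2 := hnum.mul hinv
    simpa [div_eq_mul_inv, Pi.mul_def] using h2
  have hnj : Differentiable ℝ (fun z : ℝ × ℝ => n z.1 z.2) := by
    simp only [hndef]
    have hnum : Differentiable ℝ (fun z : ℝ × ℝ => a z.1 z.2 * b z.1 (-z.2)) := by fun_prop
    have hinv : Differentiable ℝ (fun z : ℝ × ℝ => (y z.1 z.2)⁻¹) :=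
      fun z => (hyj z).inv (hy0 z.1 z.2)
    have h2 := hnum.mul hinv
    simpa [div_eq_mul_inv, Pi.mul_def] using h2
  obtain ⟨g, hgdef⟩ : (∃ f : ℝ → ℝ → ℝ, f = fun X W =>
      (-1 : ℝ) * ((p X W) ^ 2) + (1 : ℝ) * (u X * n X W) + (1 : ℝ) * (u X * m X W)) := ⟨_, rfl⟩
  obtain ⟨gx, hgxdef⟩ : (∃ f : ℝ → ℝ → ℝ, f = fun X W =>
      (2 : ℝ) * ((p X W) ^ 3) + (1 : ℝ) * (deriv u X * n X W) + (1 : ℝ) * (deriv u X * m X W) + (-3 : ℝ) * (u X * p X W * n X W) + (-3 : ℝ) * (u X * p X W * m X W) + (4 : ℝ) * ((u X) ^ 2 * p X W) + (2 : ℝ) * (W * u X * n X W) + (-2 : ℝ) * (W * u X * m X W)) := ⟨_, rfl⟩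
  obtain ⟨gxx, hgxxdef⟩ : (∃ f : ℝ → ℝ → ℝ, f = fun X W =>
      (-6 : ℝ) * ((p X W) ^ 4) + (-4 : ℝ) * (deriv u X * p X W * n X W) + (-4 : ℝ) * (deriv u X * p X W * m X W) + (12 : ℝ) * (u X * (p X W) ^ 2 * n X W) + (12 : ℝ) * (u X * (p X W) ^ 2 * m X W) + (12 : ℝ) * (u X * deriv u X * p X W) + (-3 : ℝ) * ((u X) ^ 2 * (n X W) ^ 2) + (-6 : ℝ) * ((u X) ^ 2 * m X W * n X W) + (-3 : ℝ) * ((u X) ^ 2 * (m X W) ^ 2) + (-16 : ℝ) * ((u X) ^ 2 * (p X W) ^ 2) + (6 : ℝ) * ((u X) ^ 3 * n X W) + (6 : ℝ) * ((u X) ^ 3 * m X W) + (4 : ℝ) * (W * deriv u X * n X W) + (-4 : ℝ) * (W * deriv u X * m X W) + (-8 : ℝ) * (W * u X * p X W * n X W) + (8 : ℝ) * (W * u X * p X W * m X W) + (4 : ℝ) * (W ^ 2 * u X * n X W) + (4 : ℝ) * (W ^ 2 * u X * m X W) + (1 : ℝ) * (X * u X * n X W) + (1 : ℝ) * (X * u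 X * m X W)) := ⟨_, rfl⟩
  obtain ⟨gxxx, hgxxxdef⟩ : (∃ f : ℝ → ℝ → ℝ, f = fun X W =>
      (24 : ℝ) * ((p X W) ^ 5) + (20 : ℝ) * (deriv u X * (p X W) ^ 2 * n X W) + (20 : ℝ) * (deriv u X * (p X W) ^ 2 * m X W) + (12 : ℝ) * ((deriv u X) ^ 2 * p X W) + (1 : ℝ) * (u X * n X W) + (1 : ℝ) * (u X * m X W) + (-60 : ℝ) * (u X * (p X W) ^ 3 * n X W) + (-60 : ℝ) * (u X * (p X W) ^ 3 * m X W) + (-10 : ℝ) * (u X * deriv u X * (n X W) ^ 2) + (-20 : ℝ) * (u X * deriv u X * m X W * n X W) + (-10 : ℝ) * (u X * deriv u X * (m X W) ^ 2) + (-60 : ℝ) * (u X * deriv u X * (p X W) ^ 2) + (30 : ℝ) * ((u X) ^ 2 * p X W * (n X W) ^ 2) + (60 : ℝ) * ((u X) ^ 2 * p X W * m X W * n X W) + (30 : ℝ) * ((u X) ^ 2 * p X W * (m X W) ^ 2) + (80 : ℝ) * ((u X) ^ 2 * (p X W) ^ 3) + (30 : ℝ) * ((u X) ^ 2 * deriv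 u X * n X W) + (30 : ℝ) * ((u X) ^ 2 * deriv u X * m X W) + (-70 : ℝ) * ((u X) ^ 3 * p X W * n X W) + (-70 : ℝ) * ((u X) ^ 3 * p X W * m X W) + (48 : ℝ) * ((u X) ^ 4 * p X W) + (-20 : ℝ) * (W * deriv u X * p X W * n X W) + (20 : ℝ) * (W * deriv u X * p X W * m X W) + (40 : ℝ) * (W * u X * (p X W) ^ 2 * n X W) + (-40 : ℝ) * (W * u X * (p X W) ^ 2 * m X W) + (-20 : ℝ) * (W * (u X) ^ 2 * (n X W) ^ 2) + (20 : ℝ) * (W * (u X) ^ 2 * (m X W) ^ 2) + (20 : ℝ) * (W * (u X) ^ 3 * n X W) + (-20 : ℝ) * (W * (u X) ^ 3 * m X W) + (12 : ℝ) * (W ^ 2 * deriv u X * n X W) + (12 : ℝ) * (W ^ 2 * deriv u X * m X W) + (-20 : ℝ) * (W ^ 2 * u X * p X W * n X W) + (-20 : ℝ) * (W ^ 2 * u X * p X W * m X W) + (16 : ℝ) * (W ^ 2 * (u X) ^ 2 * p X W) + (8 : ℝ) * (W ^ 3 * u X * n X W) + (-8 : ℝ) * (W ^ 3 * u X * m X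 W) + (1 : ℝ) * (X * deriv u X * n X W) + (1 : ℝ) * (X * deriv u X * m X W) + (-5 : ℝ) * (X * u X * p X W * n X W) + (-5 : ℝ) * (X * u X * p X W * m X W) + (16 : ℝ) * (X * (u X) ^ 2 * p X W) + (6 : ℝ) * (X * W * u X * n X W) + (-6 : ℝ) * (X * W * u X * m X W)) := ⟨_, rfl⟩
  obtain ⟨gxxxx, hgxxxxdef⟩ : (∃ f : ℝ → ℝ → ℝ, f = fun X W =>
      (-120 : ℝ) * ((p X W) ^ 6) + (2 : ℝ) * (deriv u X * n X W) + (2 : ℝ) * (deriv u X * m X W) + (-120 : ℝ) * (deriv u X * (p X W) ^ 3 * n X W) + (-120 : ℝ) * (deriv u X * (p X W) ^ 3 * m X W) + (-10 : ℝ) * ((deriv u X) ^ 2 * (n X W) ^ 2) + (-20 : ℝ) * ((deriv u X) ^ 2 * m X W * n X W) + (-10 : ℝ) * ((deriv u X) ^ 2 * (m X W) ^ 2) + (-72 : ℝ) * ((deriv u X) ^ 2 * (p X W) ^ 2) + (-6 : ℝ) * (u X * p X W * n X W) + (-6 : ℝ) * (u X * p X W * m X W) + (360 : ℝ) * (u X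 * (p X W) ^ 4 * n X W) + (360 : ℝ) * (u X * (p X W) ^ 4 * m X W) + (120 : ℝ) * (u X * deriv u X * p X W * (n X W) ^ 2) + (240 : ℝ) * (u X * deriv u X * p X W * m X W * n X W) + (120 : ℝ) * (u X * deriv u X * p X W * (m X W) ^ 2) + (360 : ℝ) * (u X * deriv u X * (p X W) ^ 3) + (72 : ℝ) * (u X * (deriv u X) ^ 2 * n X W) + (72 : ℝ) * (u X * (deriv u X) ^ 2 * m X W) + (20 : ℝ) * ((u X) ^ 2 * p X W) + (-270 : ℝ) * ((u X) ^ 2 * (p X W) ^ 2 * (n X W) ^ 2) + (-540 : ℝ) * ((u X) ^ 2 * (p X W) ^ 2 * m X W * n X W) + (-270 : ℝ) * ((u X) ^ 2 * (p X W) ^ 2 * (m X W) ^ 2) + (-480 : ℝ) * ((u X) ^ 2 * (p X W) ^ 4) + (-440 : ℝ) * ((u X) ^ 2 * deriv u X * p X W * n X W) + (-440 : ℝ) * ((u X) ^ 2 * deriv u X * p X W * m X W) + (30 : ℝ) * ((u X) ^ 3 * (n X W) ^ 3) + (90 : ℝ) * ((u X) ^ 3 * m X W * (n X W) ^ 2)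 + (90 : ℝ) * ((u X) ^ 3 * (m X W) ^ 2 * n X W) + (30 : ℝ) * ((u X) ^ 3 * (m X W) ^ 3) + (660 : ℝ) * ((u X) ^ 3 * (p X W) ^ 2 * n X W) + (660 : ℝ) * ((u X) ^ 3 * (p X W) ^ 2 * m X W) + (360 : ℝ) * ((u X) ^ 3 * deriv u X * p X W) + (-90 : ℝ) * ((u X) ^ 4 * (n X W) ^ 2) + (-180 : ℝ) * ((u X) ^ 4 * m X W * n X W) + (-90 : ℝ) * ((u X) ^ 4 * (m X W) ^ 2) + (-448 : ℝ) * ((u X) ^ 4 * (p X W) ^ 2) + (108 : ℝ) * ((u X) ^ 5 * n X W) + (108 : ℝ) * ((u X) ^ 5 * m X W) + (120 : ℝ) * (W * deriv u X * (p X W) ^ 2 * n X W) + (-120 : ℝ) * (W * deriv u X * (p X W) ^ 2 * m X W) + (8 : ℝ) * (W * u X * n X W) + (-8 : ℝ) * (W * u X * m X W) + (-240 : ℝ) * (W * u X * (p X W) ^ 3 * n X W) + (240 : ℝ) * (W * u X * (p X W) ^ 3 * m X W) + (-100 : ℝ) * (W * u X * deriv u X * (n X W) ^ 2) + (100 : ℝ)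 * (W * u X * deriv u X * (m X W) ^ 2) + (240 : ℝ) * (W * (u X) ^ 2 * p X W * (n X W) ^ 2) + (-240 : ℝ) * (W * (u X) ^ 2 * p X W * (m X W) ^ 2) + (120 : ℝ) * (W * (u X) ^ 2 * deriv u X * n X W) + (-120 : ℝ) * (W * (u X) ^ 2 * deriv u X * m X W) + (-280 : ℝ) * (W * (u X) ^ 3 * p X W * n X W) + (280 : ℝ) * (W * (u X) ^ 3 * p X W * m X W) + (-72 : ℝ) * (W ^ 2 * deriv u X * p X W * n X W) + (-72 : ℝ) * (W ^ 2 * deriv u X * p X W * m X W) + (120 : ℝ) * (W ^ 2 * u X * (p X W) ^ 2 * n X W) + (120 : ℝ) * (W ^ 2 * u X * (p X W) ^ 2 * m X W) + (80 : ℝ) * (W ^ 2 * u X * deriv u X * p X W) + (-100 : ℝ) * (W ^ 2 * (u X) ^ 2 * (n X W) ^ 2) + (-40 : ℝ) * (W ^ 2 * (u X) ^ 2 * m X W * n X W) + (-100 : ℝ) * (W ^ 2 * (u X) ^ 2 * (m X W) ^ 2) + (-96 : ℝ) * (W ^ 2 * (u X) ^ 2 * (p X W) ^ 2) + (80 : ℝ)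 * (W ^ 2 * (u X) ^ 3 * n X W) + (80 : ℝ) * (W ^ 2 * (u X) ^ 3 * m X W) + (32 : ℝ) * (W ^ 3 * deriv u X * n X W) + (-32 : ℝ) * (W ^ 3 * deriv u X * m X W) + (-48 : ℝ) * (W ^ 3 * u X * p X W * n X W) + (48 : ℝ) * (W ^ 3 * u X * p X W * m X W) + (16 : ℝ) * (W ^ 4 * u X * n X W) + (16 : ℝ) * (W ^ 4 * u X * m X W) + (-6 : ℝ) * (X * deriv u X * p X W * n X W) + (-6 : ℝ) * (X * deriv u X * p X W * m X W) + (30 : ℝ) * (X * u X * (p X W) ^ 2 * n X W) + (30 : ℝ) * (X * u X * (p X W) ^ 2 * m X W) + (60 : ℝ) * (X * u X * deriv u X * p X W) + (-15 : ℝ) * (X * (u X) ^ 2 * (n X W) ^ 2) + (-30 : ℝ) * (X * (u X) ^ 2 * m X W * n X W) + (-15 : ℝ) * (X * (u X) ^ 2 * (m X W) ^ 2) + (-96 : ℝ) * (X * (u X) ^ 2 * (p X W) ^ 2) + (48 : ℝ) * (X * (u X) ^ 3 * n X W) + (48 : ℝ) * (X * (u X) ^ 3 * m X W) + (8 : ℝ)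 * (X * W * deriv u X * n X W) + (-8 : ℝ) * (X * W * deriv u X * m X W) + (-36 : ℝ) * (X * W * u X * p X W * n X W) + (36 : ℝ) * (X * W * u X * p X W * m X W) + (24 : ℝ) * (X * W ^ 2 * u X * n X W) + (24 : ℝ) * (X * W ^ 2 * u X * m X W) + (1 : ℝ) * (X ^ 2 * u X * n X W) + (1 : ℝ) * (X ^ 2 * u X * m X W)) := ⟨_, rfl⟩
  obtain ⟨gw, hgwdef⟩ : (∃ f : ℝ → ℝ → ℝ, f = fun X W =>
      (-4 : ℝ) * (deriv u X * p X W * n X W) + (4 : ℝ) * (deriv u X * p X W * m X W) + (4 : ℝ) * (u X * (p X W) ^ 2 * n X W) + (-4 : ℝ) * (u X * (p X W) ^ 2 * m X W) + (-2 : ℝ) * ((u X) ^ 2 * (n X W) ^ 2) + (2 : ℝ) * ((u X) ^ 2 * (m X W) ^ 2) + (4 : ℝ) * ((u X) ^ 3 * n X W) + (-4 : ℝ) * ((u X) ^ 3 * m X W) + (-16 : ℝ) * (W * (p X W) ^ 3) + (16 : ℝ) * (W * u X * p X W * n X W) + (16 : ℝ) * (W * u X * p X W * m X W) + (-16 : ℝ)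 * (W * (u X) ^ 2 * p X W) + (-8 : ℝ) * (W ^ 2 * u X * n X W) + (8 : ℝ) * (W ^ 2 * u X * m X W) + (2 : ℝ) * (X * u X * n X W) + (-2 : ℝ) * (X * u X * m X W)) := ⟨_, rfl⟩
  obtain ⟨gwx, hgwxdef⟩ : (∃ f : ℝ → ℝ → ℝ, f = fun X W =>
      (12 : ℝ) * (deriv u X * (p X W) ^ 2 * n X W) + (-12 : ℝ) * (deriv u X * (p X W) ^ 2 * m X W) + (2 : ℝ) * (u X * n X W) + (-2 : ℝ) * (u X * m X W) + (-12 : ℝ) * (u X * (p X W) ^ 3 * n X W) + (12 : ℝ) * (u X * (p X W) ^ 3 * m X W) + (-8 : ℝ) * (u X * deriv u X * (n X W) ^ 2) + (8 : ℝ) * (u X * deriv u X * (m X W) ^ 2) + (12 : ℝ) * ((u X) ^ 2 * p X W * (n X W) ^ 2) + (-12 : ℝ) * ((u X) ^ 2 * p X W * (m X W) ^ 2) + (12 : ℝ) * ((u X) ^ 2 * deriv u X * n X W) + (-12 : ℝ) * ((u X) ^ 2 * deriv u X * m X W) + (-20 : ℝ) * ((u X) ^ 3 * p X W * n X W) + (20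 : ℝ) * ((u X) ^ 3 * p X W * m X W) + (48 : ℝ) * (W * (p X W) ^ 4) + (8 : ℝ) * (W * deriv u X * p X W * n X W) + (8 : ℝ) * (W * deriv u X * p X W * m X W) + (-72 : ℝ) * (W * u X * (p X W) ^ 2 * n X W) + (-72 : ℝ) * (W * u X * (p X W) ^ 2 * m X W) + (-32 : ℝ) * (W * u X * deriv u X * p X W) + (8 : ℝ) * (W * (u X) ^ 2 * (n X W) ^ 2) + (32 : ℝ) * (W * (u X) ^ 2 * m X W * n X W) + (8 : ℝ) * (W * (u X) ^ 2 * (m X W) ^ 2) + (80 : ℝ) * (W * (u X) ^ 2 * (p X W) ^ 2) + (-8 : ℝ) * (W * (u X) ^ 3 * n X W) + (-8 : ℝ) * (W * (u X) ^ 3 * m X W) + (-8 : ℝ) * (W ^ 2 * deriv u X * n X W) + (8 : ℝ) * (W ^ 2 * deriv u X * m X W) + (40 : ℝ) * (W ^ 2 * u X * p X W * n X W) + (-40 : ℝ) * (W ^ 2 * u X * p X W * m X W) + (-16 : ℝ) * (W ^ 3 * u X * n X W) + (-16 : ℝ) * (W ^ 3 * u X * m X W) + (2 : ℝ) * (X *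 deriv u X * n X W) + (-2 : ℝ) * (X * deriv u X * m X W) + (-6 : ℝ) * (X * u X * p X W * n X W) + (6 : ℝ) * (X * u X * p X W * m X W) + (4 : ℝ) * (X * W * u X * n X W) + (4 : ℝ) * (X * W * u X * m X W)) := ⟨_, rfl⟩
  obtain ⟨gww, hgwwdef⟩ : (∃ f : ℝ → ℝ → ℝ, f = fun X W =>
      (-16 : ℝ) * ((p X W) ^ 3) + (-8 : ℝ) * ((deriv u X) ^ 2 * (n X W) ^ 2) + (16 : ℝ) * ((deriv u X) ^ 2 * m X W * n X W) + (-8 : ℝ) * ((deriv u X) ^ 2 * (m X W) ^ 2) + (32 : ℝ) * ((deriv u X) ^ 2 * (p X W) ^ 2) + (16 : ℝ) * (u X * p X W * n X W) + (16 : ℝ) * (u X * p X W * m X W) + (32 : ℝ) * (u X * deriv u X * p X W * (n X W) ^ 2) + (-64 : ℝ) * (u X * deriv u X * p X W * m X W * n X W) + (32 : ℝ) * (u X * deriv u X * p X W * (m X W) ^ 2) + (-32 : ℝ) * (u X * deriv u X * (p X W) ^ 3) + (-16 : ℝ) * ((u X) ^ 2 * p X W) + (-24 : ℝ) * ((u X)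 ^ 2 * (p X W) ^ 2 * (n X W) ^ 2) + (48 : ℝ) * ((u X) ^ 2 * (p X W) ^ 2 * m X W * n X W) + (-24 : ℝ) * ((u X) ^ 2 * (p X W) ^ 2 * (m X W) ^ 2) + (8 : ℝ) * ((u X) ^ 3 * (n X W) ^ 3) + (-8 : ℝ) * ((u X) ^ 3 * m X W * (n X W) ^ 2) + (-8 : ℝ) * ((u X) ^ 3 * (m X W) ^ 2 * n X W) + (8 : ℝ) * ((u X) ^ 3 * (m X W) ^ 3) + (16 : ℝ) * ((u X) ^ 3 * (p X W) ^ 2 * n X W) + (16 : ℝ) * ((u X) ^ 3 * (p X W) ^ 2 * m X W) + (-32 : ℝ) * ((u X) ^ 3 * deriv u X * p X W) + (-24 : ℝ) * ((u X) ^ 4 * (n X W) ^ 2) + (16 : ℝ) * ((u X) ^ 4 * m X W * n X W) + (-24 : ℝ) * ((u X) ^ 4 * (m X W) ^ 2) + (16 : ℝ) * ((u X) ^ 5 * n X W) + (16 : ℝ) * ((u X) ^ 5 * m X W) + (-160 : ℝ) * (W * deriv u X * (p X W) ^ 2 * n X W) + (160 : ℝ) * (W * deriv u X * (p X W) ^ 2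 * m X W) + (-16 : ℝ) * (W * u X * n X W) + (16 : ℝ) * (W * u X * m X W) + (192 : ℝ) * (W * u X * (p X W) ^ 3 * n X W) + (-192 : ℝ) * (W * u X * (p X W) ^ 3 * m X W) + (48 : ℝ) * (W * u X * deriv u X * (n X W) ^ 2) + (-48 : ℝ) * (W * u X * deriv u X * (m X W) ^ 2) + (-128 : ℝ) * (W * (u X) ^ 2 * p X W * (n X W) ^ 2) + (128 : ℝ) * (W * (u X) ^ 2 * p X W * (m X W) ^ 2) + (-32 : ℝ) * (W * (u X) ^ 2 * deriv u X * n X W) + (32 : ℝ) * (W * (u X) ^ 2 * deriv u X * m X W) + (160 : ℝ) * (W * (u X) ^ 3 * p X W * n X W) + (-160 : ℝ) * (W * (u X) ^ 3 * p X W * m X W) + (-384 : ℝ) * (W ^ 2 * (p X W) ^ 4) + (32 : ℝ) * (W ^ 2 * deriv u X * p X W * n X W) + (32 : ℝ) * (W ^ 2 * deriv u X * p X W * m X W) + (416 : ℝ) * (W ^ 2 * u X * (p X W) ^ 2 * n X W) + (416 : ℝ) * (W ^ 2 * u X * (p X W) ^ 2 * m X W) + (64 : ℝ) * (W ^ 2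 * u X * deriv u X * p X W) + (-16 : ℝ) * (W ^ 2 * (u X) ^ 2 * (n X W) ^ 2) + (-160 : ℝ) * (W ^ 2 * (u X) ^ 2 * m X W * n X W) + (-16 : ℝ) * (W ^ 2 * (u X) ^ 2 * (m X W) ^ 2) + (-384 : ℝ) * (W ^ 2 * (u X) ^ 2 * (p X W) ^ 2) + (-192 : ℝ) * (W ^ 3 * u X * p X W * n X W) + (192 : ℝ) * (W ^ 3 * u X * p X W * m X W) + (64 : ℝ) * (W ^ 4 * u X * n X W) + (64 : ℝ) * (W ^ 4 * u X * m X W) + (-8 : ℝ) * (X * deriv u X * p X W * n X W) + (-8 : ℝ) * (X * deriv u X * p X W * m X W) + (8 : ℝ) * (X * u X * (p X W) ^ 2 * n X W) + (8 : ℝ) * (X * u X * (p X W) ^ 2 * m X W) + (-16 : ℝ) * (X * u X * deriv u X * p X W) + (-12 : ℝ) * (X * (u X) ^ 2 * (n X W) ^ 2) + (8 : ℝ) * (X * (u X) ^ 2 * m X W * n X W) + (-12 : ℝ) * (X * (u X) ^ 2 * (m X W) ^ 2) + (16 : ℝ) * (X * (u X) ^ 3 * n X W) + (16 : ℝ) *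 (X * (u X) ^ 3 * m X W) + (48 : ℝ) * (X * W * u X * p X W * n X W) + (-48 : ℝ) * (X * W * u X * p X W * m X W) + (-32 : ℝ) * (X * W ^ 2 * u X * n X W) + (-32 : ℝ) * (X * W ^ 2 * u X * m X W) + (4 : ℝ) * (X ^ 2 * u X * n X W) + (4 : ℝ) * (X ^ 2 * u X * m X W)) := ⟨_, rfl⟩
  have hgX : ∀ X W : ℝ, HasDerivAt (fun x' => g x' W) (gx X W) X := by
    intro X W
    simp only [hgdef, hgxdef]
    exact hda_congr (((((hpX X W).pow 2).const_mul (-1 : ℝ)).add (((hUx X).mul (hnX X W)).const_mul (1 : ℝ))).add (((hUx X).mul (hmX X W)).const_mul (1 : ℝ))) (by ring)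
  have hgxX : ∀ X W : ℝ, HasDerivAt (fun x' => gx x' W) (gxx X W) X := by
    intro X W
    simp only [hgxdef, hgxxdef]
    exact hda_congr ((((((((((hpX X W).pow 3).const_mul (2 : ℝ)).add (((hVx X).mul (hnX X W)).const_mul (1 : ℝ))).add (((hVx X).mul (hmX X W)).const_mul (1 : ℝ))).add ((((hUx X).mul (hpX X W)).mul (hnX X W)).const_mul (-3 : ℝ))).add ((((hUx X).mul (hpX X W)).mul (hmX X W)).const_mul (-3 : ℝ))).add ((((hUx X).pow 2).mul (hpX X W)).const_mul (4 : ℝ))).add ((((hasDerivAt_const X (W)).mul (hUx X)).mul (hnX X W)).const_mul (2 : ℝ))).add ((((hasDerivAt_const X (W)).mul (hUx X)).mul (hmX X W)).const_mul (-2 : ℝ))) (by simp only [Pi.add_apply, Pi.sub_apply, Pi.mul_apply, Pi.pow_apply, Pi.neg_apply, id]; ring)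
  have hgxxX : ∀ X W : ℝ, HasDerivAt (fun x' => gxx x' W) (gxxx X W) X := by
    intro X W
    simp only [hgxxdef, hgxxxdef]
    exact hda_congr ((((((((((((((((((((((hpX X W).pow 4).const_mul (-6 : ℝ)).add ((((hVx X).mul (hpX X W)).mul (hnX X W)).const_mul (-4 : ℝ))).add ((((hVx X).mul (hpX X W)).mul (hmX X W)).const_mul (-4 : ℝ))).add ((((hUx X).mul ((hpX X W).pow 2)).mul (hnX X W)).const_mul (12 : ℝ))).add ((((hUx X).mul ((hpX X W).pow 2)).mul (hmX X W)).const_mul (12 : ℝ))).add ((((hUx X).mul (hVx X)).mul (hpX X W)).const_mul (12 : ℝ))).add ((((hUx X).pow 2).mul ((hnX X W).pow 2)).const_mul (-3 : ℝ))).add (((((hUx X).pow 2).mul (hmX X W)).mul (hnX X W)).const_mul (-6 : ℝ))).add ((((hUx X).pow 2).mul ((hmX X W).pow 2)).const_mul (-3 : ℝ))).add ((((hUx X).pow 2).mul ((hpX X W).pow 2)).const_mul (-16 : ℝ))).add ((((hUx X).pow 3).mul (hnX X W)).const_mul (6 : ℝ))).add ((((hUx X).pow 3).mul (hmX X W)).const_mul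 (6 : ℝ))).add ((((hasDerivAt_const X (W)).mul (hVx X)).mul (hnX X W)).const_mul (4 : ℝ))).add ((((hasDerivAt_const X (W)).mul (hVx X)).mul (hmX X W)).const_mul (-4 : ℝ))).add (((((hasDerivAt_const X (W)).mul (hUx X)).mul (hpX X W)).mul (hnX X W)).const_mul (-8 : ℝ))).add (((((hasDerivAt_const X (W)).mul (hUx X)).mul (hpX X W)).mul (hmX X W)).const_mul (8 : ℝ))).add ((((hasDerivAt_const X (W ^ 2)).mul (hUx X)).mul (hnX X W)).const_mul (4 : ℝ))).add ((((hasDerivAt_const X (W ^ 2)).mul (hUx X)).mul (hmX X W)).const_mul (4 : ℝ))).add ((((hasDerivAt_id' X).mul (hUx X)).mul (hnX X W)).const_mul (1 : ℝ))).add ((((hasDerivAt_id' X).mul (hUx X)).mul (hmX X W)).const_mul (1 : ℝ))) (by simp only [Pi.add_apply, Pi.sub_apply, Pi.mul_apply, Pi.pow_apply, Pi.neg_apply, id]; ring)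
  have hgxxxX : ∀ X W : ℝ, HasDerivAt (fun x' => gxxx x' W) (gxxxx X W) X := by
    intro X W
    simp only [hgxxxdef, hgxxxxdef]
    exact hda_congr (((((((((((((((((((((((((((((((((((((((((((((hpX X W).pow 5).const_mul (24 : ℝ)).add ((((hVx X).mul ((hpX X W).pow 2)).mul (hnX X W)).const_mul (20 : ℝ))).add ((((hVx X).mul ((hpX X W).pow 2)).mul (hmX X W)).const_mul (20 : ℝ))).add ((((hVx X).pow 2).mul (hpX X W)).const_mul (12 : ℝ))).add (((hUx X).mul (hnX X W)).const_mul (1 : ℝ))).add (((hUx X).mul (hmX X W)).const_mul (1 : ℝ))).add ((((hUx X).mul ((hpX X W).pow 3)).mul (hnX X W)).const_mul (-60 : ℝ))).add ((((hUx X).mul ((hpX X W).pow 3)).mul (hmX X W)).const_mul (-60 : ℝ))).add ((((hUx X).mul (hVx X)).mul ((hnX X W).pow 2)).const_mul (-10 : ℝ))).add (((((hUx X).mul (hVx X)).mul (hmX X W)).mul (hnX X W)).const_mul (-20 : ℝ))).add ((((hUx X).mul (hVx X)).mul ((hmX X W).pow 2)).const_mul (-10 : ℝ))).add ((((hUx X).mul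 (hVx X)).mul ((hpX X W).pow 2)).const_mul (-60 : ℝ))).add (((((hUx X).pow 2).mul (hpX X W)).mul ((hnX X W).pow 2)).const_mul (30 : ℝ))).add ((((((hUx X).pow 2).mul (hpX X W)).mul (hmX X W)).mul (hnX X W)).const_mul (60 : ℝ))).add (((((hUx X).pow 2).mul (hpX X W)).mul ((hmX X W).pow 2)).const_mul (30 : ℝ))).add ((((hUx X).pow 2).mul ((hpX X W).pow 3)).const_mul (80 : ℝ))).add (((((hUx X).pow 2).mul (hVx X)).mul (hnX X W)).const_mul (30 : ℝ))).add (((((hUx X).pow 2).mul (hVx X)).mul (hmX X W)).const_mul (30 : ℝ))).add (((((hUx X).pow 3).mul (hpX X W)).mul (hnX X W)).const_mul (-70 : ℝ))).add (((((hUx X).pow 3).mul (hpX X W)).mul (hmX X W)).const_mul (-70 : ℝ))).add ((((hUx X).pow 4).mul (hpX X W)).const_mul (48 : ℝ))).add (((((hasDerivAt_const X (W)).mul (hVx X)).mul (hpX X W)).mul (hnX X W)).const_mul (-20 : ℝ))).add (((((hasDerivAt_const X (W)).mul (hVx X)).mul (hpX X W)).mul (hmX X W)).const_mul (20 : ℝ))).add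 (((((hasDerivAt_const X (W)).mul (hUx X)).mul ((hpX X W).pow 2)).mul (hnX X W)).const_mul (40 : ℝ))).add (((((hasDerivAt_const X (W)).mul (hUx X)).mul ((hpX X W).pow 2)).mul (hmX X W)).const_mul (-40 : ℝ))).add ((((hasDerivAt_const X (W)).mul ((hUx X).pow 2)).mul ((hnX X W).pow 2)).const_mul (-20 : ℝ))).add ((((hasDerivAt_const X (W)).mul ((hUx X).pow 2)).mul ((hmX X W).pow 2)).const_mul (20 : ℝ))).add ((((hasDerivAt_const X (W)).mul ((hUx X).pow 3)).mul (hnX X W)).const_mul (20 : ℝ))).add ((((hasDerivAt_const X (W)).mul ((hUx X).pow 3)).mul (hmX X W)).const_mul (-20 : ℝ))).add ((((hasDerivAt_const X (W ^ 2)).mul (hVx X)).mul (hnX X W)).const_mul (12 : ℝ))).add ((((hasDerivAt_const X (W ^ 2)).mul (hVx X)).mul (hmX X W)).const_mul (12 : ℝ))).add (((((hasDerivAt_const X (W ^ 2)).mul (hUx X)).mul (hpX X W)).mul (hnX X W)).const_mul (-20 : ℝ))).add (((((hasDerivAt_const X (W ^ 2)).mul (hUx X)).mul (hpX X W)).mul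 (hmX X W)).const_mul (-20 : ℝ))).add ((((hasDerivAt_const X (W ^ 2)).mul ((hUx X).pow 2)).mul (hpX X W)).const_mul (16 : ℝ))).add ((((hasDerivAt_const X (W ^ 3)).mul (hUx X)).mul (hnX X W)).const_mul (8 : ℝ))).add ((((hasDerivAt_const X (W ^ 3)).mul (hUx X)).mul (hmX X W)).const_mul (-8 : ℝ))).add ((((hasDerivAt_id' X).mul (hVx X)).mul (hnX X W)).const_mul (1 : ℝ))).add ((((hasDerivAt_id' X).mul (hVx X)).mul (hmX X W)).const_mul (1 : ℝ))).add (((((hasDerivAt_id' X).mul (hUx X)).mul (hpX X W)).mul (hnX X W)).const_mul (-5 : ℝ))).add (((((hasDerivAt_id' X).mul (hUx X)).mul (hpX X W)).mul (hmX X W)).const_mul (-5 : ℝ))).add ((((hasDerivAt_id' X).mul ((hUx X).pow 2)).mul (hpX X W)).const_mul (16 : ℝ))).add (((((hasDerivAt_id' X).mul (hasDerivAt_const X (W))).mul (hUx X)).mul (hnX X W)).const_mul (6 : ℝ))).add (((((hasDerivAt_id' X).mul (hasDerivAt_const X (W))).mul (hUx X)).mul (hmX X W)).const_mul (-6 : ℝ)))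 (by simp only [Pi.add_apply, Pi.sub_apply, Pi.mul_apply, Pi.pow_apply, Pi.neg_apply, id]; ring)
  have hgwX : ∀ X W : ℝ, HasDerivAt (fun x' => gw x' W) (gwx X W) X := by
    intro X W
    simp only [hgwdef, hgwxdef]
    exact hda_congr (((((((((((((((((((hVx X).mul (hpX X W)).mul (hnX X W)).const_mul (-4 : ℝ)).add ((((hVx X).mul (hpX X W)).mul (hmX X W)).const_mul (4 : ℝ))).add ((((hUx X).mul ((hpX X W).pow 2)).mul (hnX X W)).const_mul (4 : ℝ))).add ((((hUx X).mul ((hpX X W).pow 2)).mul (hmX X W)).const_mul (-4 : ℝ))).add ((((hUx X).pow 2).mul ((hnX X W).pow 2)).const_mul (-2 : ℝ))).add ((((hUx X).pow 2).mul ((hmX X W).pow 2)).const_mul (2 : ℝ))).add ((((hUx X).pow 3).mul (hnX X W)).const_mul (4 : ℝ))).add ((((hUx X).pow 3).mul (hmX X W)).const_mul (-4 : ℝ))).add (((hasDerivAt_const X (W)).mul ((hpX X W).pow 3)).const_mul (-16 : ℝ))).add (((((hasDerivAt_const X (W)).mul (hUx X)).mul (hpX X W)).mul (hnX X W)).const_mul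 (16 : ℝ))).add (((((hasDerivAt_const X (W)).mul (hUx X)).mul (hpX X W)).mul (hmX X W)).const_mul (16 : ℝ))).add ((((hasDerivAt_const X (W)).mul ((hUx X).pow 2)).mul (hpX X W)).const_mul (-16 : ℝ))).add ((((hasDerivAt_const X (W ^ 2)).mul (hUx X)).mul (hnX X W)).const_mul (-8 : ℝ))).add ((((hasDerivAt_const X (W ^ 2)).mul (hUx X)).mul (hmX X W)).const_mul (8 : ℝ))).add ((((hasDerivAt_id' X).mul (hUx X)).mul (hnX X W)).const_mul (2 : ℝ))).add ((((hasDerivAt_id' X).mul (hUx X)).mul (hmX X W)).const_mul (-2 : ℝ))) (by simp only [Pi.add_apply, Pi.sub_apply, Pi.mul_apply, Pi.pow_apply, Pi.neg_apply, id]; ring)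
  have hgW : ∀ X W : ℝ, HasDerivAt (fun w' => g X w') (gw X W) W := by
    intro X W
    simp only [hgdef, hgwdef]
    exact hda_congr (((((hpW X W).pow 2).const_mul (-1 : ℝ)).add (((hasDerivAt_const W (u X)).mul (hnW X W)).const_mul (1 : ℝ))).add (((hasDerivAt_const W (u X)).mul (hmW X W)).const_mul (1 : ℝ))) (by ring)
  have hgxW : ∀ X W : ℝ, HasDerivAt (fun w' => gx X w') (gwx X W) W := by
    intro X W
    simp only [hgxdef, hgwxdef]
    exact hda_congr ((((((((((hpW X W).pow 3).const_mul (2 : ℝ)).add (((hasDerivAt_const W (deriv u X)).mul (hnW X W)).const_mul (1 : ℝ))).add (((hasDerivAt_const W (deriv u X)).mul (hmW X W)).const_mul (1 : ℝ))).add ((((hasDerivAt_const W (u X)).mul (hpW X W)).mul (hnW X W)).const_mul (-3 : ℝ))).add ((((hasDerivAt_const W (u X)).mul (hpW X W)).mul (hmW X W)).const_mul (-3 : ℝ))).add (((hasDerivAt_const W ((u X) ^ 2)).mul (hpW X W)).const_mul (4 : ℝ))).add ((((hasDerivAt_id' W).mul (hasDerivAt_const W (u X))).mul (hnW X W)).const_mul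 (2 : ℝ))).add ((((hasDerivAt_id' W).mul (hasDerivAt_const W (u X))).mul (hmW X W)).const_mul (-2 : ℝ))) (by simp only [Pi.add_apply, Pi.sub_apply, Pi.mul_apply, Pi.pow_apply, Pi.neg_apply, id]; ring)
  have hgwW : ∀ X W : ℝ, HasDerivAt (fun w' => gw X w') (gww X W) W := by
    intro X W
    simp only [hgwdef, hgwwdef]
    exact hda_congr (((((((((((((((((((hasDerivAt_const W (deriv u X)).mul (hpW X W)).mul (hnW X W)).const_mul (-4 : ℝ)).add ((((hasDerivAt_const W (deriv u X)).mul (hpW X W)).mul (hmW X W)).const_mul (4 : ℝ))).add ((((hasDerivAt_const W (u X)).mul ((hpW X W).pow 2)).mul (hnW X W)).const_mul (4 : ℝ))).add ((((hasDerivAt_const W (u X)).mul ((hpW X W).pow 2)).mul (hmW X W)).const_mul (-4 : ℝ))).add (((hasDerivAt_const W ((u X) ^ 2)).mul ((hnW X W).pow 2)).const_mul (-2 : ℝ))).add (((hasDerivAt_const W ((u X) ^ 2)).mul ((hmW X W).pow 2)).const_mul (2 : ℝ))).add (((hasDerivAt_const W ((u X) ^ 3)).mul (hnW X W)).const_mul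 (4 : ℝ))).add (((hasDerivAt_const W ((u X) ^ 3)).mul (hmW X W)).const_mul (-4 : ℝ))).add (((hasDerivAt_id' W).mul ((hpW X W).pow 3)).const_mul (-16 : ℝ))).add (((((hasDerivAt_id' W).mul (hasDerivAt_const W (u X))).mul (hpW X W)).mul (hnW X W)).const_mul (16 : ℝ))).add (((((hasDerivAt_id' W).mul (hasDerivAt_const W (u X))).mul (hpW X W)).mul (hmW X W)).const_mul (16 : ℝ))).add ((((hasDerivAt_id' W).mul (hasDerivAt_const W ((u X) ^ 2))).mul (hpW X W)).const_mul (-16 : ℝ))).add (((((hasDerivAt_id' W).pow 2).mul (hasDerivAt_const W (u X))).mul (hnW X W)).const_mul (-8 : ℝ))).add (((((hasDerivAt_id' W).pow 2).mul (hasDerivAt_const W (u X))).mul (hmW X W)).const_mul (8 : ℝ))).add ((((hasDerivAt_const W (X)).mul (hasDerivAt_const W (u X))).mul (hnW X W)).const_mul (2 : ℝ))).add ((((hasDerivAt_const W (X)).mul (hasDerivAt_const W (u X))).mul (hmW X W)).const_mul (-2 : ℝ))) (by simp only [Pi.add_apply, Pi.sub_apply, Pi.mul_apply, Pi.pow_apply,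 Pi.neg_apply, id]; ring)
  have hgj : Differentiable ℝ (fun z : ℝ × ℝ => g z.1 z.2) := by
    simp only [hgdef]
    fun_prop
  have hgxj : Differentiable ℝ (fun z : ℝ × ℝ => gx z.1 z.2) := by
    simp only [hgxdef]
    fun_prop
  have hgwj : Differentiable ℝ (fun z : ℝ × ℝ => gw z.1 z.2) := by
    simp only [hgwdef]
    fun_prop
  have K1 : ∀ A B : ℝ, HasDerivAt (fun x' => Real.log (y x' B)) (p A B) A := by
    intro A B
    refine hda_congr ((hyX A B).log (hy0 A B)) ?_
    simp only [hpdef]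
    rw [div_eq_div_iff (hy0 A B) (hy0 A B)]
    linear_combination (-(2 * u A * deriv u A * y A B)) * hQP A B
  have hpsieq : ∀ (X T R' : ℝ), 0 < T →
      iteratedDeriv 2 (fun r' =>
        Real.log (y (T ^ (-(1:ℝ)/3) * r' + T ^ (-(4:ℝ)/3) * X ^ 2)
          (T ^ (-(2:ℝ)/3) * X / 2))) R'
      = T ^ (-(2:ℝ)/3) * g (T ^ (-(1:ℝ)/3) * R' + T ^ (-(4:ℝ)/3) * X ^ 2)
          (T ^ (-(2:ℝ)/3) * X / 2) := by
    intro X T R' hT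
    rw [itd2]
    have hd1 : deriv (fun r' =>
        Real.log (y (T ^ (-(1:ℝ)/3) * r' + T ^ (-(4:ℝ)/3) * X ^ 2) (T ^ (-(2:ℝ)/3) * X / 2)))
        = fun R'' => p (T ^ (-(1:ℝ)/3) * R'' + T ^ (-(4:ℝ)/3) * X ^ 2)
            (T ^ (-(2:ℝ)/3) * X / 2) * T ^ (-(1:ℝ)/3) := by
      funext R''
      have htree := comp_affine K1 (T ^ (-(2:ℝ)/3) * X / 2)
        (T ^ (-(1:ℝ)/3)) (T ^ (-(4:ℝ)/3) * X ^ 2) R''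
      exact HasDerivAt.deriv (by exact htree)
    rw [hd1]
    have e : deriv (fun R'' => p (T ^ (-(1:ℝ)/3) * R'' + T ^ (-(4:ℝ)/3) * X ^ 2)
        (T ^ (-(2:ℝ)/3) * X / 2) * T ^ (-(1:ℝ)/3)) R'
        = ((-1 : ℝ) * ((p (T ^ (-(1:ℝ)/3) * R' + T ^ (-(4:ℝ)/3) * X ^ 2) (T ^ (-(2:ℝ)/3) * X / 2)) ^ 2) + (1 : ℝ) * (u (T ^ (-(1:ℝ)/3) * R' + T ^ (-(4:ℝ)/3) * X ^ 2) * n (T ^ (-(1:ℝ)/3) * R' + T ^ (-(4:ℝ)/3) * X ^ 2) (T ^ (-(2:ℝ)/3) * X / 2)) + (1 : ℝ) * (u (T ^ (-(1:ℝ)/3) * R' + T ^ (-(4:ℝ)/3) * X ^ 2) * m (T ^ (-(1:ℝ)/3) * R' + T ^ (-(4:ℝ)/3) * X ^ 2) (T ^ (-(2:ℝ)/3) * X / 2))) * T ^ (-(1:ℝ)/3) * T ^ (-(1:ℝ)/3) := by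
      have htree := (comp_affine hpX (T ^ (-(2:ℝ)/3) * X / 2)
        (T ^ (-(1:ℝ)/3)) (T ^ (-(4:ℝ)/3) * X ^ 2) R').mul_const (T ^ (-(1:ℝ)/3))
      exact HasDerivAt.deriv (by exact htree)
    rw [e, show T ^ (-(2:ℝ)/3) = T ^ (-(1:ℝ)/3) * T ^ (-(1:ℝ)/3) from by
      rw [← Real.rpow_add hT]; norm_num]
    simp only [hgdef]
    ring
  obtain ⟨c, hc⟩ : (∃ c : ℝ, c = t ^ (-(1:ℝ)/3)) := ⟨_, rfl⟩
  have h1 : t ^ (-(1:ℝ)/3) = c := hc.symm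
  have h2 : t ^ (-(2:ℝ)/3) = c ^ 2 := by
    rw [hc, ← Real.rpow_natCast (t ^ (-(1:ℝ)/3)) 2, ← Real.rpow_mul ht.le]; norm_num
  have h4 : t ^ (-(4:ℝ)/3) = c ^ 4 := by
    rw [hc, ← Real.rpow_natCast (t ^ (-(1:ℝ)/3)) 4, ← Real.rpow_mul ht.le]; norm_num
  have h5 : t ^ (-(5:ℝ)/3) = c ^ 5 := by
    rw [hc, ← Real.rpow_natCast (t ^ (-(1:ℝ)/3)) 5, ← Real.rpow_mul ht.le]; norm_num
  have h7 : t ^ (-(7:ℝ)/3) = c ^ 7 := by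
    rw [hc, ← Real.rpow_natCast (t ^ (-(1:ℝ)/3)) 7, ← Real.rpow_mul ht.le]; norm_num
  have hDt : ∀ R' : ℝ, deriv (fun t' =>
      iteratedDeriv 2 (fun r' =>
        Real.log (y (t' ^ (-(1:ℝ)/3) * r' + t' ^ (-(4:ℝ)/3) * x ^ 2)
          (t' ^ (-(2:ℝ)/3) * x / 2))) R') t = -(2:ℝ)/3 * c ^ 5 * g (c * R' + c ^ 4 * x ^ 2) (c ^ 2 * x / 2) + c ^ 2 * (gx (c * R' + c ^ 4 * x ^ 2) (c ^ 2 * x / 2) * (-(1:ℝ)/3 * c ^ 4 * R' + -(4:ℝ)/3 * c ^ 7 * x ^ 2) + gw (c * R' + c ^ 4 * x ^ 2) (c ^ 2 * x / 2) * (-(1:ℝ)/3 * c ^ 5 * x)) := by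
    intro R'
    have hev : (fun t' =>
        iteratedDeriv 2 (fun r' =>
          Real.log (y (t' ^ (-(1:ℝ)/3) * r' + t' ^ (-(4:ℝ)/3) * x ^ 2)
            (t' ^ (-(2:ℝ)/3) * x / 2))) R') =ᶠ[𝓝 t] (fun t' =>
        t' ^ (-(2:ℝ)/3) * g (t' ^ (-(1:ℝ)/3) * R' + t' ^ (-(4:ℝ)/3) * x ^ 2)
          (t' ^ (-(2:ℝ)/3) * x / 2)) := by
      filter_upwards [eventually_gt_nhds ht] with t' ht'
      exact hpsieq x t' R' ht'
    rw [hev.deriv_eq]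
    have hs : HasDerivAt (fun t' : ℝ => t' ^ (-(1:ℝ)/3) * R' + t' ^ (-(4:ℝ)/3) * x ^ 2)
        (-(1:ℝ)/3 * t ^ (-(1:ℝ)/3 - 1) * R' + -(4:ℝ)/3 * t ^ (-(4:ℝ)/3 - 1) * x ^ 2) t :=
      ((Real.hasDerivAt_rpow_const (p := -(1:ℝ)/3) (Or.inl (ne_of_gt ht))).mul_const R').add
        ((Real.hasDerivAt_rpow_const (p := -(4:ℝ)/3) (Or.inl (ne_of_gt ht))).mul_const (x ^ 2))
    have hw : HasDerivAt (fun t' : ℝ => t' ^ (-(2:ℝ)/3) * x / 2)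
        (-(2:ℝ)/3 * t ^ (-(2:ℝ)/3 - 1) * x / 2) t :=
      ((Real.hasDerivAt_rpow_const (p := -(2:ℝ)/3) (Or.inl (ne_of_gt ht))).mul_const x).div_const 2
    have e : deriv (fun t' =>
        t' ^ (-(2:ℝ)/3) * g (t' ^ (-(1:ℝ)/3) * R' + t' ^ (-(4:ℝ)/3) * x ^ 2)
          (t' ^ (-(2:ℝ)/3) * x / 2)) t = -(2:ℝ)/3 * t ^ (-(2:ℝ)/3 - 1) * g (t ^ (-(1:ℝ)/3) * R' + t ^ (-(4:ℝ)/3) * x ^ 2) (t ^ (-(2:ℝ)/3) * x / 2) + t ^ (-(2:ℝ)/3) * (gx (t ^ (-(1:ℝ)/3) * R' + t ^ (-(4:ℝ)/3) * x ^ 2) (t ^ (-(2:ℝ)/3) * x / 2) * (-(1:ℝ)/3 * t ^ (-(1:ℝ)/3 - 1) * R' + -(4:ℝ)/3 * t ^ (-(4:ℝ)/3 - 1) * x ^ 2) + gw (t ^ (-(1:ℝ)/3) * R' + t ^ (-(4:ℝ)/3) * x ^ 2) (t ^ (-(2:ℝ)/3) * x / 2) * (-(2:ℝ)/3 * t ^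 (-(2:ℝ)/3 - 1) * x / 2)) := by
      have htree := (Real.hasDerivAt_rpow_const (p := -(2:ℝ)/3)
        (Or.inl (ne_of_gt ht))).mul (chain2 hgj hgX hgW hs hw)
      exact HasDerivAt.deriv (by exact htree)
    rw [e, show (-(2:ℝ)/3 - 1 : ℝ) = -(5:ℝ)/3 from by norm_num,
      show (-(1:ℝ)/3 - 1 : ℝ) = -(4:ℝ)/3 from by norm_num,
      show (-(4:ℝ)/3 - 1 : ℝ) = -(7:ℝ)/3 from by norm_num, h1, h2, h4, h5, h7]
    ring
  have hpsival : ∀ R' : ℝ, iteratedDeriv 2 (fun r' =>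
        Real.log (y (t ^ (-(1:ℝ)/3) * r' + t ^ (-(4:ℝ)/3) * x ^ 2)
          (t ^ (-(2:ℝ)/3) * x / 2))) R'
      = c ^ 2 * g (c * R' + c ^ 4 * x ^ 2) (c ^ 2 * x / 2) := by
    intro R'
    rw [hpsieq x t R' ht, h1, h2, h4]
  have hpsir : ∀ R' : ℝ, deriv (fun s => iteratedDeriv 2 (fun r' =>
        Real.log (y (t ^ (-(1:ℝ)/3) * r' + t ^ (-(4:ℝ)/3) * x ^ 2)
          (t ^ (-(2:ℝ)/3) * x / 2))) s) R'
      = c ^ 2 * (gx (c * R' + c ^ 4 * x ^ 2) (c ^ 2 * x / 2) * c) := by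
    intro R'
    have hfe : (fun s => iteratedDeriv 2 (fun r' =>
        Real.log (y (t ^ (-(1:ℝ)/3) * r' + t ^ (-(4:ℝ)/3) * x ^ 2)
          (t ^ (-(2:ℝ)/3) * x / 2))) s)
        = fun s => t ^ (-(2:ℝ)/3) * g (t ^ (-(1:ℝ)/3) * s + t ^ (-(4:ℝ)/3) * x ^ 2) (t ^ (-(2:ℝ)/3) * x / 2) :=
      funext fun s => hpsieq x t s ht
    rw [hfe]
    have e : deriv (fun s => t ^ (-(2:ℝ)/3) * g (t ^ (-(1:ℝ)/3) * s + t ^ (-(4:ℝ)/3) * x ^ 2) (t ^ (-(2:ℝ)/3) * x / 2)) R'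
        = t ^ (-(2:ℝ)/3) * (gx (t ^ (-(1:ℝ)/3) * R' + t ^ (-(4:ℝ)/3) * x ^ 2) (t ^ (-(2:ℝ)/3) * x / 2) * t ^ (-(1:ℝ)/3)) := by
      have htree := (comp_affine hgX (t ^ (-(2:ℝ)/3) * x / 2)
        (t ^ (-(1:ℝ)/3)) (t ^ (-(4:ℝ)/3) * x ^ 2) R').const_mul (t ^ (-(2:ℝ)/3))
      exact HasDerivAt.deriv (by exact htree)
    rw [e, h1, h2, h4]
  have hpsir3 : ∀ R' : ℝ, iteratedDeriv 3 (fun s => iteratedDeriv 2 (fun r' =>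
        Real.log (y (t ^ (-(1:ℝ)/3) * r' + t ^ (-(4:ℝ)/3) * x ^ 2)
          (t ^ (-(2:ℝ)/3) * x / 2))) s) R'
      = c ^ 2 * (gxxx (c * R' + c ^ 4 * x ^ 2) (c ^ 2 * x / 2) * c * c * c) := by
    intro R'
    rw [itd3]
    have hfe : (fun s => iteratedDeriv 2 (fun r' =>
        Real.log (y (t ^ (-(1:ℝ)/3) * r' + t ^ (-(4:ℝ)/3) * x ^ 2)
          (t ^ (-(2:ℝ)/3) * x / 2))) s)
        = fun s => t ^ (-(2:ℝ)/3) * g (t ^ (-(1:ℝ)/3) * s + t ^ (-(4:ℝ)/3) * x ^ 2) (t ^ (-(2:ℝ)/3) * x / 2) :=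
      funext fun s => hpsieq x t s ht
    rw [hfe]
    have d1 : deriv (fun s => t ^ (-(2:ℝ)/3) * g (t ^ (-(1:ℝ)/3) * s + t ^ (-(4:ℝ)/3) * x ^ 2) (t ^ (-(2:ℝ)/3) * x / 2))
        = fun s => t ^ (-(2:ℝ)/3) * (gx (t ^ (-(1:ℝ)/3) * s + t ^ (-(4:ℝ)/3) * x ^ 2) (t ^ (-(2:ℝ)/3) * x / 2) * t ^ (-(1:ℝ)/3)) := by
      funext s
      have htree := (comp_affine hgX (t ^ (-(2:ℝ)/3) * x / 2)
        (t ^ (-(1:ℝ)/3)) (t ^ (-(4:ℝ)/3) * x ^ 2) s).const_mul (t ^ (-(2:ℝ)/3))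
      exact HasDerivAt.deriv (by exact htree)
    rw [d1]
    have d2 : deriv (fun s => t ^ (-(2:ℝ)/3) * (gx (t ^ (-(1:ℝ)/3) * s + t ^ (-(4:ℝ)/3) * x ^ 2) (t ^ (-(2:ℝ)/3) * x / 2) * t ^ (-(1:ℝ)/3)))
        = fun s => t ^ (-(2:ℝ)/3) * (gxx (t ^ (-(1:ℝ)/3) * s + t ^ (-(4:ℝ)/3) * x ^ 2) (t ^ (-(2:ℝ)/3) * x / 2) * t ^ (-(1:ℝ)/3) * t ^ (-(1:ℝ)/3)) := by
      funext s
      have htree := ((comp_affine hgxX (t ^ (-(2:ℝ)/3) * x / 2)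
        (t ^ (-(1:ℝ)/3)) (t ^ (-(4:ℝ)/3) * x ^ 2) s).mul_const
          (t ^ (-(1:ℝ)/3))).const_mul (t ^ (-(2:ℝ)/3))
      exact HasDerivAt.deriv (by exact htree)
    rw [d2]
    have e3 : deriv (fun s => t ^ (-(2:ℝ)/3) *
        (gxx (t ^ (-(1:ℝ)/3) * s + t ^ (-(4:ℝ)/3) * x ^ 2) (t ^ (-(2:ℝ)/3) * x / 2) * t ^ (-(1:ℝ)/3) * t ^ (-(1:ℝ)/3))) R'
        = t ^ (-(2:ℝ)/3) * (gxxx (t ^ (-(1:ℝ)/3) * R' + t ^ (-(4:ℝ)/3) * x ^ 2) (t ^ (-(2:ℝ)/3) * x / 2) * t ^ (-(1:ℝ)/3) * t ^ (-(1:ℝ)/3)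
            * t ^ (-(1:ℝ)/3)) := by
      have htree := (((comp_affine hgxxX (t ^ (-(2:ℝ)/3) * x / 2)
        (t ^ (-(1:ℝ)/3)) (t ^ (-(4:ℝ)/3) * x ^ 2) R').mul_const (t ^ (-(1:ℝ)/3))).mul_const
          (t ^ (-(1:ℝ)/3))).const_mul (t ^ (-(2:ℝ)/3))
      exact HasDerivAt.deriv (by exact htree)
    rw [e3, h1, h2, h4]
  have hphival : ∀ R' : ℝ, -(t ^ (-(2:ℝ)/3)) * u (t ^ (-(1:ℝ)/3) * R' + t ^ (-(4:ℝ)/3) * x ^ 2) ^ 2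
      = -(c ^ 2) * u (c * R' + c ^ 4 * x ^ 2) ^ 2 := by
    intro R'
    rw [h1, h2, h4]
  have hphir : ∀ R' : ℝ, deriv (fun s => -(t ^ (-(2:ℝ)/3)) * u (t ^ (-(1:ℝ)/3) * s + t ^ (-(4:ℝ)/3) * x ^ 2) ^ 2) R'
      = -(2 * c ^ 3 * (u (c * R' + c ^ 4 * x ^ 2) * deriv u (c * R' + c ^ 4 * x ^ 2))) := by
    intro R'
    have e : deriv (fun s => -(t ^ (-(2:ℝ)/3)) * u (t ^ (-(1:ℝ)/3) * s + t ^ (-(4:ℝ)/3) * x ^ 2) ^ 2) R'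
        = -(t ^ (-(2:ℝ)/3)) * (2 * (u (t ^ (-(1:ℝ)/3) * R' + t ^ (-(4:ℝ)/3) * x ^ 2) * (deriv u (t ^ (-(1:ℝ)/3) * R' + t ^ (-(4:ℝ)/3) * x ^ 2) * t ^ (-(1:ℝ)/3)))) :=
      by
      have htree := ((comp_affine1 hUx (t ^ (-(1:ℝ)/3))
        (t ^ (-(4:ℝ)/3) * x ^ 2) R').pow 2).const_mul (-(t ^ (-(2:ℝ)/3)))
      exact HasDerivAt.deriv (hda_congr (by exact htree) (by ring))
    rw [e, h1, h2, h4]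
    ring
  have hPhieq : (fun r' => deriv (fun t' =>
      iteratedDeriv 2 (fun r' =>
        Real.log (y (t' ^ (-(1:ℝ)/3) * r' + t' ^ (-(4:ℝ)/3) * x ^ 2)
          (t' ^ (-(2:ℝ)/3) * x / 2))) r') t
      + iteratedDeriv 2 (fun r' =>
        Real.log (y (t ^ (-(1:ℝ)/3) * r' + t ^ (-(4:ℝ)/3) * x ^ 2)
          (t ^ (-(2:ℝ)/3) * x / 2))) r' * deriv (fun s => iteratedDeriv 2 (fun r' =>
        Real.log (y (t ^ (-(1:ℝ)/3) * r' + t ^ (-(4:ℝ)/3) * x ^ 2)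
          (t ^ (-(2:ℝ)/3) * x / 2))) s) r'
      + (1/12) * iteratedDeriv 3 (fun s => iteratedDeriv 2 (fun r' =>
        Real.log (y (t ^ (-(1:ℝ)/3) * r' + t ^ (-(4:ℝ)/3) * x ^ 2)
          (t ^ (-(2:ℝ)/3) * x / 2))) s) r'
      + -(t ^ (-(2:ℝ)/3)) * u (t ^ (-(1:ℝ)/3) * r' + t ^ (-(4:ℝ)/3) * x ^ 2) ^ 2 * deriv (fun s => iteratedDeriv 2 (fun r' =>
        Real.log (y (t ^ (-(1:ℝ)/3) * r' + t ^ (-(4:ℝ)/3) * x ^ 2)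
          (t ^ (-(2:ℝ)/3) * x / 2))) s) r'
      + iteratedDeriv 2 (fun r' =>
        Real.log (y (t ^ (-(1:ℝ)/3) * r' + t ^ (-(4:ℝ)/3) * x ^ 2)
          (t ^ (-(2:ℝ)/3) * x / 2))) r' * deriv (fun s => -(t ^ (-(2:ℝ)/3)) * u (t ^ (-(1:ℝ)/3) * s + t ^ (-(4:ℝ)/3) * x ^ 2) ^ 2) r') = (fun r' => -(2:ℝ)/3 * c ^ 5 * g (c * r' + c ^ 4 * x ^ 2) (c ^ 2 * x / 2) + c ^ 2 * (gx (c * r' + c ^ 4 * x ^ 2) (c ^ 2 * x / 2) * (-(1:ℝ)/3 * c ^ 4 * r' + -(4:ℝ)/3 * c ^ 7 * x ^ 2) + gw (c * r' + c ^ 4 * x ^ 2) (c ^ 2 * x / 2) * (-(1:ℝ)/3 * c ^ 5 * x)) + c ^ 2 * g (c * r' + c ^ 4 * x ^ 2) (c ^ 2 * x / 2) * (c ^ 2 * (gx (c * r' + c ^ 4 * x ^ 2) (c ^ 2 * x / 2) * c)) + (1/12) * (c ^ 2 * (gxxx (c * r' + c ^ 4 * x ^ 2) (c ^ 2 * x /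 2) * c * c * c)) + -(c ^ 2) * u (c * r' + c ^ 4 * x ^ 2) ^ 2 * (c ^ 2 * (gx (c * r' + c ^ 4 * x ^ 2) (c ^ 2 * x / 2) * c)) + c ^ 2 * g (c * r' + c ^ 4 * x ^ 2) (c ^ 2 * x / 2) * -(2 * c ^ 3 * (u (c * r' + c ^ 4 * x ^ 2) * deriv u (c * r' + c ^ 4 * x ^ 2)))) := by
    funext R'
    rw [hDt R', hpsival R', hpsir R', hpsir3 R', hphival R', hphir R']
  have houter : deriv (fun r' => -(2:ℝ)/3 * c ^ 5 * g (c * r' + c ^ 4 * x ^ 2) (c ^ 2 * x / 2) + c ^ 2 * (gx (c * r' + c ^ 4 * x ^ 2) (c ^ 2 * x / 2) * (-(1:ℝ)/3 * c ^ 4 * r' + -(4:ℝ)/3 * c ^ 7 * x ^ 2) + gw (c * r' + c ^ 4 * x ^ 2) (c ^ 2 * x / 2) * (-(1:ℝ)/3 * c ^ 5 * x)) + c ^ 2 * g (c * r' + c ^ 4 * x ^ 2) (c ^ 2 * x / 2) * (c ^ 2 * (gx (c * r' + c ^ 4 * x ^ 2) (c ^ 2 * x / 2) * c)) + (1/12)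 * (c ^ 2 * (gxxx (c * r' + c ^ 4 * x ^ 2) (c ^ 2 * x / 2) * c * c * c)) + -(c ^ 2) * u (c * r' + c ^ 4 * x ^ 2) ^ 2 * (c ^ 2 * (gx (c * r' + c ^ 4 * x ^ 2) (c ^ 2 * x / 2) * c)) + c ^ 2 * g (c * r' + c ^ 4 * x ^ 2) (c ^ 2 * x / 2) * -(2 * c ^ 3 * (u (c * r' + c ^ 4 * x ^ 2) * deriv u (c * r' + c ^ 4 * x ^ 2)))) r = (1/12 : ℝ) * (c ^ 6 * gxxxx (c * r + c ^ 4 * x ^ 2) (c ^ 2 * x / 2)) + (-1 : ℝ) * (c ^ 6 * gxx (c * r + c ^ 4 * x ^ 2) (c ^ 2 * x / 2) * (u (c * r + c ^ 4 * x ^ 2)) ^ 2) + (-1 : ℝ) * (c ^ 6 * gx (c * r + c ^ 4 * x ^ 2) (c ^ 2 * x / 2)) + (-4 : ℝ) * (c ^ 6 * gx (c * r + c ^ 4 * x ^ 2) (c ^ 2 * x / 2) * u (c * r + c ^ 4 * x ^ 2) * deriv u (c * r + c ^ 4 * x ^ 2)) + (1 : ℝ) * (c ^ 6 * (gx (c *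 r + c ^ 4 * x ^ 2) (c ^ 2 * x / 2)) ^ 2) + (-2 : ℝ) * (c ^ 6 * g (c * r + c ^ 4 * x ^ 2) (c ^ 2 * x / 2) * (deriv u (c * r + c ^ 4 * x ^ 2)) ^ 2) + (-4 : ℝ) * (c ^ 6 * g (c * r + c ^ 4 * x ^ 2) (c ^ 2 * x / 2) * (u (c * r + c ^ 4 * x ^ 2)) ^ 4) + (1 : ℝ) * (c ^ 6 * g (c * r + c ^ 4 * x ^ 2) (c ^ 2 * x / 2) * gxx (c * r + c ^ 4 * x ^ 2) (c ^ 2 * x / 2)) + (-1/3 : ℝ) * (c ^ 7 * r * gxx (c * r + c ^ 4 * x ^ 2) (c ^ 2 * x / 2)) + (-2 : ℝ) * (c ^ 7 * r * g (c * r + c ^ 4 * x ^ 2) (c ^ 2 * x / 2) * (u (c * r + c ^ 4 * x ^ 2)) ^ 2) + (-1/3 : ℝ) * (c ^ 8 * x * gwx (c * r + c ^ 4 * x ^ 2) (c ^ 2 * x / 2)) + (-4/3 : ℝ) * (c ^ 10 * x ^ 2 * gxx (c * r + c ^ 4 * x ^ 2) (c ^ 2 * x / 2)) + (-2 : ℝ)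 * (c ^ 10 * x ^ 2 * g (c * r + c ^ 4 * x ^ 2) (c ^ 2 * x / 2) * (u (c * r + c ^ 4 * x ^ 2)) ^ 2) := by
    have hcg := comp_affine hgX (c ^ 2 * x / 2) c (c ^ 4 * x ^ 2) r
    have hcgx := comp_affine hgxX (c ^ 2 * x / 2) c (c ^ 4 * x ^ 2) r
    have hcgxxx := comp_affine hgxxxX (c ^ 2 * x / 2) c (c ^ 4 * x ^ 2) r
    have hcgw := comp_affine hgwX (c ^ 2 * x / 2) c (c ^ 4 * x ^ 2) r
    have hcu := comp_affine1 hUx c (c ^ 4 * x ^ 2) r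
    have hcV := comp_affine1 hVx c (c ^ 4 * x ^ 2) r
    have T1 := (hcg.const_mul (-(2:ℝ)/3 * c ^ 5)).add
      (((hcgx.mul (((hasDerivAt_id' r).const_mul (-(1:ℝ)/3 * c ^ 4)).add_const
        (-(4:ℝ)/3 * c ^ 7 * x ^ 2))).add (hcgw.mul_const (-(1:ℝ)/3 * c ^ 5 * x))).const_mul
          (c ^ 2))
    have T2 := (hcg.const_mul (c ^ 2)).mul ((hcgx.mul_const c).const_mul (c ^ 2))
    have T3 := ((((hcgxxx.mul_const c).mul_const c).mul_const c).const_mul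
      (c ^ 2)).const_mul (1/12)
    have T4 := ((hcu.pow 2).const_mul (-(c ^ 2))).mul ((hcgx.mul_const c).const_mul (c ^ 2))
    have T5 := (hcg.const_mul (c ^ 2)).mul (((hcu.mul hcV).const_mul (2 * c ^ 3)).neg)
    have tree := (((T1.add T2).add T3).add T4).add T5
    exact HasDerivAt.deriv (hda_congr tree (by simp only [Pi.add_apply, Pi.sub_apply, Pi.mul_apply, Pi.pow_apply, Pi.neg_apply, id]; ring))
  have hsxd : ∀ X' : ℝ, HasDerivAt (fun x' => c * r + c ^ 4 * x' ^ 2) (2 * c ^ 4 * X') X' :=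
    fun X' => hda_congr ((((hasDerivAt_id' X').pow 2).const_mul (c ^ 4)).const_add (c * r))
      (by ring)
  have hwxd : ∀ X' : ℝ, HasDerivAt (fun x' => c ^ 2 * x' / 2) (c ^ 2 / 2) X' :=
    fun X' => hda_congr (((hasDerivAt_id' X').const_mul (c ^ 2)).div_const 2) (by ring)
  have hx1 : ∀ X' : ℝ, deriv (fun x' => c ^ 2 * g (c * r + c ^ 4 * x' ^ 2) (c ^ 2 * x' / 2)) X'
      = c ^ 2 * (gx (c * r + c ^ 4 * X' ^ 2) (c ^ 2 * X' / 2) * (2 * c ^ 4 * X')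
        + gw (c * r + c ^ 4 * X' ^ 2) (c ^ 2 * X' / 2) * (c ^ 2 / 2)) := by
    intro X'
    have htree := (chain2 hgj hgX hgW (hsxd X') (hwxd X')).const_mul (c ^ 2)
    exact HasDerivAt.deriv (by exact htree)
  have hxx : iteratedDeriv 2 (fun x' =>
      iteratedDeriv 2 (fun r' =>
        Real.log (y (t ^ (-(1:ℝ)/3) * r' + t ^ (-(4:ℝ)/3) * x' ^ 2)
          (t ^ (-(2:ℝ)/3) * x' / 2))) r) x = (1/4 : ℝ) * (c ^ 6 * gww (c * r + c ^ 4 * x ^ 2) (c ^ 2 * x / 2)) + (2 : ℝ) * (c ^ 6 * gx (c * r + c ^ 4 * x ^ 2) (c ^ 2 * x / 2)) + (2 : ℝ) * (c ^ 8 * x * gwx (c * r + c ^ 4 * x ^ 2) (c ^ 2 * x / 2)) + (4 : ℝ) * (c ^ 10 * x ^ 2 * gxx (c * r + c ^ 4 * x ^ 2) (c ^ 2 * x / 2)) := by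
    rw [itd2]
    have hfe2 : (fun x' =>
        iteratedDeriv 2 (fun r' =>
          Real.log (y (t ^ (-(1:ℝ)/3) * r' + t ^ (-(4:ℝ)/3) * x' ^ 2)
            (t ^ (-(2:ℝ)/3) * x' / 2))) r)
        = fun x' => c ^ 2 * g (c * r + c ^ 4 * x' ^ 2) (c ^ 2 * x' / 2) := by
      funext x'
      rw [hpsieq x' t r ht, h1, h2, h4]
    rw [hfe2, funext hx1]
    have tree := (((chain2 hgxj hgxX hgxW (hsxd x) (hwxd x)).mul
      ((hasDerivAt_id' x).const_mul (2 * c ^ 4))).add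
      ((chain2 hgwj hgwX hgwW (hsxd x) (hwxd x)).mul_const (c ^ 2 / 2))).const_mul (c ^ 2)
    exact HasDerivAt.deriv (hda_congr tree (by ring))
  show deriv (fun r' => deriv (fun t' =>
      iteratedDeriv 2 (fun r' =>
        Real.log (y (t' ^ (-(1:ℝ)/3) * r' + t' ^ (-(4:ℝ)/3) * x ^ 2)
          (t' ^ (-(2:ℝ)/3) * x / 2))) r') t
      + iteratedDeriv 2 (fun r' =>
        Real.log (y (t ^ (-(1:ℝ)/3) * r' + t ^ (-(4:ℝ)/3) * x ^ 2)
          (t ^ (-(2:ℝ)/3) * x / 2))) r' * deriv (fun s => iteratedDeriv 2 (fun r' =>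
        Real.log (y (t ^ (-(1:ℝ)/3) * r' + t ^ (-(4:ℝ)/3) * x ^ 2)
          (t ^ (-(2:ℝ)/3) * x / 2))) s) r'
      + (1/12) * iteratedDeriv 3 (fun s => iteratedDeriv 2 (fun r' =>
        Real.log (y (t ^ (-(1:ℝ)/3) * r' + t ^ (-(4:ℝ)/3) * x ^ 2)
          (t ^ (-(2:ℝ)/3) * x / 2))) s) r'
      + -(t ^ (-(2:ℝ)/3)) * u (t ^ (-(1:ℝ)/3) * r' + t ^ (-(4:ℝ)/3) * x ^ 2) ^ 2 * deriv (fun s => iteratedDeriv 2 (fun r' =>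
        Real.log (y (t ^ (-(1:ℝ)/3) * r' + t ^ (-(4:ℝ)/3) * x ^ 2)
          (t ^ (-(2:ℝ)/3) * x / 2))) s) r'
      + iteratedDeriv 2 (fun r' =>
        Real.log (y (t ^ (-(1:ℝ)/3) * r' + t ^ (-(4:ℝ)/3) * x ^ 2)
          (t ^ (-(2:ℝ)/3) * x / 2))) r' * deriv (fun s => -(t ^ (-(2:ℝ)/3)) * u (t ^ (-(1:ℝ)/3) * s + t ^ (-(4:ℝ)/3) * x ^ 2) ^ 2) r') r
    + (1/4) * iteratedDeriv 2 (fun x' =>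
      iteratedDeriv 2 (fun r' =>
        Real.log (y (t ^ (-(1:ℝ)/3) * r' + t ^ (-(4:ℝ)/3) * x' ^ 2)
          (t ^ (-(2:ℝ)/3) * x' / 2))) r) x = 0
  rw [hPhieq, houter, hxx]
  simp only [hgdef, hgxdef, hgxxdef, hgxxxdef, hgxxxxdef, hgwdef, hgwxdef, hgwwdef]
  linear_combination ((2 : ℝ) * (c ^ 6 * (deriv u (c * r + c ^ 4 * x ^ 2)) ^ 2) + (-8 : ℝ) * (c ^ 6 * u (c * r + c ^ 4 * x ^ 2) * deriv u (c * r + c ^ 4 * x ^ 2) * p (c * r + c ^ 4 * x ^ 2) (c ^ 2 * x / 2)) + (6 : ℝ) * (c ^ 6 * (u (c * r + c ^ 4 * x ^ 2)) ^ 2 * (p (c * r + c ^ 4 * x ^ 2) (c ^ 2 * x / 2)) ^ 2) + (-2 : ℝ) * (c ^ 6 * (u (c * r + c ^ 4 * x ^ 2)) ^ 3 * n (c * r + c ^ 4 * x ^ 2) (c ^ 2 * x / 2)) + (-2 : ℝ) * (c ^ 6 * (u (c * r + c ^ 4 * x ^ 2)) ^ 3 * m (c * r + c ^ 4 * x ^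 2) (c ^ 2 * x / 2)) + (4 : ℝ) * (c ^ 6 * (u (c * r + c ^ 4 * x ^ 2)) ^ 4) + (2 : ℝ) * (c ^ 7 * r * (u (c * r + c ^ 4 * x ^ 2)) ^ 2) + (2 : ℝ) * (c ^ 10 * x ^ 2 * (u (c * r + c ^ 4 * x ^ 2)) ^ 2)) * hRSc (c * r + c ^ 4 * x ^ 2) (c ^ 2 * x / 2)
    + ((2 : ℝ) * (c ^ 6 * (p (c * r + c ^ 4 * x ^ 2) (c ^ 2 * x / 2)) ^ 3) + (1/3 : ℝ) * (c ^ 6 * deriv u (c * r + c ^ 4 * x ^ 2) * n (c * r + c ^ 4 * x ^ 2) (c ^ 2 * x / 2)) + (1/3 : ℝ) * (c ^ 6 * deriv u (c * r + c ^ 4 * x ^ 2) * m (c * r + c ^ 4 * x ^ 2) (c ^ 2 * x / 2)) + (-2 : ℝ) * (c ^ 6 * u (c * r + c ^ 4 * x ^ 2) * p (c * r + c ^ 4 * x ^ 2) (c ^ 2 * x / 2) * n (c * r + c ^ 4 * x ^ 2) (c ^ 2 * x / 2)) + (-2 : ℝ) * (c ^ 6 * u (c * r + c ^ 4 * x ^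 2) * p (c * r + c ^ 4 * x ^ 2) (c ^ 2 * x / 2) * m (c * r + c ^ 4 * x ^ 2) (c ^ 2 * x / 2)) + (4/3 : ℝ) * (c ^ 6 * (u (c * r + c ^ 4 * x ^ 2)) ^ 2 * p (c * r + c ^ 4 * x ^ 2) (c ^ 2 * x / 2)) + (1/3 : ℝ) * (c ^ 8 * x * u (c * r + c ^ 4 * x ^ 2) * n (c * r + c ^ 4 * x ^ 2) (c ^ 2 * x / 2)) + (-1/3 : ℝ) * (c ^ 8 * x * u (c * r + c ^ 4 * x ^ 2) * m (c * r + c ^ 4 * x ^ 2) (c ^ 2 * x / 2))) * hYp (c * r + c ^ 4 * x ^ 2) (c ^ 2 * x / 2)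
end

section
/- Let ψ : ℝ → ℝ be infinitely differentiable and satisfy the ordinary differential equation ψ'''(s) + 12·ψ(s)·ψ'(s) − 4s·ψ'(s) − 2·ψ(s) = 0 for all s ∈ ℝ. Define φ(x,t,r) = t^(-2/3)·ψ( t^(-1/3)·r + t^(-4/3)·x^2 ) for (x,t,r) ∈ ℝ × (0,∞) × ℝ. Then φ satisfies the (r-differentiated) KP equation: ∂_r( ∂_t φ + φ·∂_r φ + (1/12)·∂_r^3 φ ) + (1/4)·∂_x^2 φ = 0 at every point of ℝ × (0,∞) × ℝ. -/
/-- the self-similar ansatz `φ(x,t,r) = t^{-2/3} ψ(t^{-1/3} r + t^{-4/3} x²)`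
built from a solution `ψ` of `ψ''' + 12 ψ ψ' - 4 s ψ' - 2 ψ = 0` satisfies the
(r-differentiated) KP equation on ℝ × (0,∞) × ℝ. -/
theorem selfSimilar_GUE_solves_KP (ψ : ℝ → ℝ)
    (hψ : ContDiff ℝ (⊤ : ℕ∞) ψ)
    (hode : ∀ s : ℝ, iteratedDeriv 3 ψ s + 12 * ψ s * deriv ψ s
      - 4 * s * deriv ψ s - 2 * ψ s = 0) :
    ∀ x t r : ℝ, 0 < t →
      kpDiff (fun x t r =>
        t ^ (-(2:ℝ)/3) * ψ (t ^ (-(1:ℝ)/3) * r + t ^ (-(4:ℝ)/3) * x ^ 2)) x t r = 0 := by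
  intro x t r ht
  have hc : ∀ n : ℕ, ContDiff ℝ (⊤ : ℕ∞) (deriv^[n] ψ) := fun n => hψ.iterate_deriv n
  have hd0 : ∀ y, HasDerivAt ψ (deriv ψ y) y :=
    fun y => (hψ.differentiable (by simp) y).hasDerivAt
  have hd1 : ∀ y, HasDerivAt (deriv ψ) (deriv (deriv ψ) y) y := fun y => by
    have := ((hc 1).differentiable (by simp) y).hasDerivAt
    simpa using this
  have hd2 : ∀ y, HasDerivAt (deriv (deriv ψ)) (deriv (deriv (deriv ψ)) y) y := fun y => by
    have := ((hc 2).differentiable (by simp) y).hasDerivAt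
    simpa [Function.iterate_succ, Function.comp] using this
  have hd3 : ∀ y, HasDerivAt (deriv (deriv (deriv ψ)))
      (deriv (deriv (deriv (deriv ψ))) y) y := fun y => by
    have := ((hc 3).differentiable (by simp) y).hasDerivAt
    simpa [Function.iterate_succ, Function.comp] using this
  -- affine chain rule
  have chain : ∀ (f : ℝ → ℝ), (∀ y, HasDerivAt f (deriv f y) y) → ∀ (A B s : ℝ),
      HasDerivAt (fun z => f (A * z + B)) (deriv f (A * s + B) * A) s := by
    intro f hf A B s
    have h := (hf (A * s + B)).comp s (((hasDerivAt_id s).const_mul A).add_const B)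
    simpa [Function.comp_def, mul_one] using h
  -- quadratic chain rule
  have chainq : ∀ (f : ℝ → ℝ), (∀ y, HasDerivAt f (deriv f y) y) → ∀ (K M s : ℝ),
      HasDerivAt (fun z => f (K + M * z ^ 2)) (deriv f (K + M * s ^ 2) * (M * (2 * s))) s := by
    intro f hf K M s
    have hin : HasDerivAt (fun z : ℝ => K + M * z ^ 2) (M * (2 * s)) s := by
      have h := ((hasDerivAt_pow 2 s).const_mul M).const_add K
      norm_num at h
      simpa [mul_comm] using h
    simpa [Function.comp_def] using (hf _).comp s hin
  have hrpow : ∀ p : ℝ, HasDerivAt (fun t' : ℝ => t' ^ p) (p * t ^ (p - 1)) t :=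
    fun p => Real.hasDerivAt_rpow_const (Or.inl ht.ne')
  -- differentiated ODE
  have hE : ∀ s : ℝ, deriv (deriv (deriv (deriv ψ))) s
      + (12 * deriv ψ s * deriv ψ s + 12 * ψ s * deriv (deriv ψ) s)
      - (4 * 1 * deriv ψ s + 4 * s * deriv (deriv ψ) s) - 2 * deriv ψ s = 0 := by
    have h3 : iteratedDeriv 3 ψ = deriv (deriv (deriv ψ)) := by
      rw [show (3 : ℕ) = 2 + 1 from rfl, iteratedDeriv_succ,
        show (2 : ℕ) = 1 + 1 from rfl, iteratedDeriv_succ, iteratedDeriv_one]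
    have hGfun : (fun s => deriv (deriv (deriv ψ)) s + 12 * ψ s * deriv ψ s
        - 4 * s * deriv ψ s - 2 * ψ s) = fun _ => (0 : ℝ) := by
      funext s
      have h := hode s
      rw [h3] at h
      exact h
    intro s
    have hG : HasDerivAt (fun s => deriv (deriv (deriv ψ)) s + 12 * ψ s * deriv ψ s
        - 4 * s * deriv ψ s - 2 * ψ s)
        (deriv (deriv (deriv (deriv ψ))) s
          + (12 * deriv ψ s * deriv ψ s + 12 * ψ s * deriv (deriv ψ) s)
          - (4 * 1 * deriv ψ s + 4 * s * deriv (deriv ψ) s) - 2 * deriv ψ s) s := by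
      have t1 := hd3 s
      have t2 := (((hd0 s).const_mul 12).mul (hd1 s))
      have t3 := (((hasDerivAt_id s).const_mul 4).mul (hd1 s))
      have t4 := (hd0 s).const_mul 2
      have := ((t1.add t2).sub t3).sub t4
      exact this
    have h0 : deriv (fun s => deriv (deriv (deriv ψ)) s + 12 * ψ s * deriv ψ s
        - 4 * s * deriv ψ s - 2 * ψ s) s = 0 := by
      rw [hGfun]; simp
    rw [← hG.deriv]; exact h0
  -- abbreviations
  set w : ℝ := t ^ (-(1:ℝ)/3) with hw
  have hpow : ∀ n : ℕ, w ^ n = t ^ (-(1:ℝ)/3 * (n : ℝ)) := by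
    intro n
    rw [hw, ← Real.rpow_natCast (t ^ (-(1:ℝ)/3)) n, ← Real.rpow_mul ht.le]
  have e2 : t ^ (-(2:ℝ)/3) = w ^ 2 := by rw [hpow]; norm_num
  have e4 : t ^ (-(4:ℝ)/3) = w ^ 4 := by rw [hpow]; norm_num
  have e5 : t ^ (-(2:ℝ)/3 - 1) = w ^ 5 := by rw [hpow]; norm_num
  have e4' : t ^ (-(1:ℝ)/3 - 1) = w ^ 4 := by rw [hpow]; norm_num
  have e7 : t ^ (-(4:ℝ)/3 - 1) = w ^ 7 := by rw [hpow]; norm_num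
  simp only [kpDiff]
  set C : ℝ := t ^ (-(2:ℝ)/3) with hC
  set M : ℝ := t ^ (-(4:ℝ)/3) with hM
  set B : ℝ := M * x ^ 2 with hB
  -- r-derivative functions
  have hD1 : deriv (fun s => C * ψ (w * s + B)) = fun s => C * (deriv ψ (w * s + B) * w) := by
    funext s; exact ((chain ψ hd0 w B s).const_mul C).deriv
  have hD2 : deriv (fun s => C * (deriv ψ (w * s + B) * w))
      = fun s => C * (deriv (deriv ψ) (w * s + B) * w * w) := by
    funext s; exact (((chain (deriv ψ) hd1 w B s).mul_const w).const_mul C).deriv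
  have hD3 : deriv (fun s => C * (deriv (deriv ψ) (w * s + B) * w * w))
      = fun s => C * (deriv (deriv (deriv ψ)) (w * s + B) * w * w * w) := by
    funext s
    exact ((((chain (deriv (deriv ψ)) hd2 w B s).mul_const w).mul_const w).const_mul C).deriv
  have hI3 : iteratedDeriv 3 (fun s => C * ψ (w * s + B))
      = fun s => C * (deriv (deriv (deriv ψ)) (w * s + B) * w * w * w) := by
    rw [show (3 : ℕ) = 2 + 1 from rfl, iteratedDeriv_succ,
      show (2 : ℕ) = 1 + 1 from rfl, iteratedDeriv_succ, iteratedDeriv_one, hD1, hD2, hD3]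
  -- t-derivative
  have hT : ∀ r' : ℝ, deriv (fun t' : ℝ =>
        t' ^ (-(2:ℝ)/3) * ψ (t' ^ (-(1:ℝ)/3) * r' + t' ^ (-(4:ℝ)/3) * x ^ 2)) t
      = -(2:ℝ)/3 * t ^ (-(2:ℝ)/3 - 1) * ψ (w * r' + B)
        + C * (deriv ψ (w * r' + B)
          * (-(1:ℝ)/3 * t ^ (-(1:ℝ)/3 - 1) * r' + -(4:ℝ)/3 * t ^ (-(4:ℝ)/3 - 1) * x ^ 2)) := by
    intro r'
    have hin : HasDerivAt (fun t' : ℝ => t' ^ (-(1:ℝ)/3) * r' + t' ^ (-(4:ℝ)/3) * x ^ 2)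
        (-(1:ℝ)/3 * t ^ (-(1:ℝ)/3 - 1) * r' + -(4:ℝ)/3 * t ^ (-(4:ℝ)/3 - 1) * x ^ 2) t :=
      ((hrpow (-(1:ℝ)/3)).mul_const r').add ((hrpow (-(4:ℝ)/3)).mul_const (x ^ 2))
    have hcomp : HasDerivAt (fun t' : ℝ => ψ (t' ^ (-(1:ℝ)/3) * r' + t' ^ (-(4:ℝ)/3) * x ^ 2))
        (deriv ψ (w * r' + B)
          * (-(1:ℝ)/3 * t ^ (-(1:ℝ)/3 - 1) * r' + -(4:ℝ)/3 * t ^ (-(4:ℝ)/3 - 1) * x ^ 2)) t := by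
      simpa [Function.comp_def, hw, hB, hM] using (hd0 _).comp t hin
    exact ((hrpow (-(2:ℝ)/3)).mul hcomp).deriv
  -- rewrite the bracket
  have hBr : (fun r' => deriv (fun t' : ℝ =>
        t' ^ (-(2:ℝ)/3) * ψ (t' ^ (-(1:ℝ)/3) * r' + t' ^ (-(4:ℝ)/3) * x ^ 2)) t
      + C * ψ (w * r' + B) * deriv (fun s => C * ψ (w * s + B)) r'
      + 1 / 12 * iteratedDeriv 3 (fun s => C * ψ (w * s + B)) r')
      = fun r' => -(2:ℝ)/3 * t ^ (-(2:ℝ)/3 - 1) * ψ (w * r' + B)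
        + C * (deriv ψ (w * r' + B)
          * (-(1:ℝ)/3 * t ^ (-(1:ℝ)/3 - 1) * r' + -(4:ℝ)/3 * t ^ (-(4:ℝ)/3 - 1) * x ^ 2))
        + C * ψ (w * r' + B) * (C * (deriv ψ (w * r' + B) * w))
        + 1 / 12 * (C * (deriv (deriv (deriv ψ)) (w * r' + B) * w * w * w)) := by
    funext r'
    rw [hT r', hD1, hI3]
  -- derivative of the bracket at r
  have hBig : HasDerivAt (fun r' => -(2:ℝ)/3 * t ^ (-(2:ℝ)/3 - 1) * ψ (w * r' + B)
        + C * (deriv ψ (w * r' + B)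
          * (-(1:ℝ)/3 * t ^ (-(1:ℝ)/3 - 1) * r' + -(4:ℝ)/3 * t ^ (-(4:ℝ)/3 - 1) * x ^ 2))
        + C * ψ (w * r' + B) * (C * (deriv ψ (w * r' + B) * w))
        + 1 / 12 * (C * (deriv (deriv (deriv ψ)) (w * r' + B) * w * w * w)))
      ( (deriv ψ (w * r + B) * w) * (-(2:ℝ)/3 * t ^ (-(2:ℝ)/3 - 1))
        + C * ((deriv (deriv ψ) (w * r + B) * w)
            * (-(1:ℝ)/3 * t ^ (-(1:ℝ)/3 - 1) * r + -(4:ℝ)/3 * t ^ (-(4:ℝ)/3 - 1) * x ^ 2)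
          + deriv ψ (w * r + B) * (-(1:ℝ)/3 * t ^ (-(1:ℝ)/3 - 1) * 1))
        + ((deriv ψ (w * r + B) * w * C) * (C * (deriv ψ (w * r + B) * w))
          + C * ψ (w * r + B) * (C * (deriv (deriv ψ) (w * r + B) * w * w)))
        + 1 / 12 * (C * (deriv (deriv (deriv (deriv ψ))) (w * r + B) * w * w * w * w)) ) r := by
    have t1 : HasDerivAt (fun r' : ℝ => -(2:ℝ)/3 * t ^ (-(2:ℝ)/3 - 1) * ψ (w * r' + B))
        ((deriv ψ (w * r + B) * w) * (-(2:ℝ)/3 * t ^ (-(2:ℝ)/3 - 1))) r := by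
      simpa [mul_comm] using (chain ψ hd0 w B r).const_mul (-(2:ℝ)/3 * t ^ (-(2:ℝ)/3 - 1))
    have t2 : HasDerivAt (fun r' : ℝ => C * (deriv ψ (w * r' + B)
          * (-(1:ℝ)/3 * t ^ (-(1:ℝ)/3 - 1) * r' + -(4:ℝ)/3 * t ^ (-(4:ℝ)/3 - 1) * x ^ 2)))
        (C * ((deriv (deriv ψ) (w * r + B) * w)
            * (-(1:ℝ)/3 * t ^ (-(1:ℝ)/3 - 1) * r + -(4:ℝ)/3 * t ^ (-(4:ℝ)/3 - 1) * x ^ 2)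
          + deriv ψ (w * r + B) * (-(1:ℝ)/3 * t ^ (-(1:ℝ)/3 - 1) * 1))) r := by
      have hlin : HasDerivAt (fun r' : ℝ =>
          -(1:ℝ)/3 * t ^ (-(1:ℝ)/3 - 1) * r' + -(4:ℝ)/3 * t ^ (-(4:ℝ)/3 - 1) * x ^ 2)
          (-(1:ℝ)/3 * t ^ (-(1:ℝ)/3 - 1) * 1) r :=
        ((hasDerivAt_id r).const_mul (-(1:ℝ)/3 * t ^ (-(1:ℝ)/3 - 1))).add_const _
      exact ((chain (deriv ψ) hd1 w B r).mul hlin).const_mul C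
    have t3 : HasDerivAt (fun r' : ℝ => C * ψ (w * r' + B) * (C * (deriv ψ (w * r' + B) * w)))
        ((deriv ψ (w * r + B) * w * C) * (C * (deriv ψ (w * r + B) * w))
          + C * ψ (w * r + B) * (C * (deriv (deriv ψ) (w * r + B) * w * w))) r := by
      have a1 : HasDerivAt (fun r' : ℝ => C * ψ (w * r' + B)) (deriv ψ (w * r + B) * w * C) r := by
        simpa [mul_comm] using (chain ψ hd0 w B r).const_mul C
      have a2 : HasDerivAt (fun r' : ℝ => C * (deriv ψ (w * r' + B) * w))
          (C * (deriv (deriv ψ) (w * r + B) * w * w)) r :=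
        (((chain (deriv ψ) hd1 w B r).mul_const w)).const_mul C
      exact a1.mul a2
    have t4 : HasDerivAt (fun r' : ℝ =>
          1 / 12 * (C * (deriv (deriv (deriv ψ)) (w * r' + B) * w * w * w)))
        (1 / 12 * (C * (deriv (deriv (deriv (deriv ψ))) (w * r + B) * w * w * w * w))) r :=
      (((((chain (deriv (deriv (deriv ψ))) hd3 w B r).mul_const w).mul_const w).mul_const
        w).const_mul C).const_mul (1/12)
    exact ((t1.add t2).add t3).add t4
  -- x-derivatives
  have hX1 : deriv (fun x' => C * ψ (w * r + M * x' ^ 2))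
      = fun x' => C * (deriv ψ (w * r + M * x' ^ 2) * (M * (2 * x'))) := by
    funext x'; exact ((chainq ψ hd0 (w * r) M x').const_mul C).deriv
  have hX2 : deriv (fun x' => C * (deriv ψ (w * r + M * x' ^ 2) * (M * (2 * x')))) x
      = C * (deriv (deriv ψ) (w * r + M * x ^ 2) * (M * (2 * x)) * (M * (2 * x))
        + deriv ψ (w * r + M * x ^ 2) * (M * (2 * 1))) := by
    have hf := chainq (deriv ψ) hd1 (w * r) M x
    have hg : HasDerivAt (fun z : ℝ => M * (2 * z)) (M * (2 * 1)) x :=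
      ((hasDerivAt_id x).const_mul 2).const_mul M
    exact ((hf.mul hg).const_mul C).deriv
  have hXval : iteratedDeriv 2 (fun x' => C * ψ (w * r + M * x' ^ 2)) x
      = C * (deriv (deriv ψ) (w * r + M * x ^ 2) * (M * (2 * x)) * (M * (2 * x))
        + deriv ψ (w * r + M * x ^ 2) * (M * (2 * 1))) := by
    rw [show (2 : ℕ) = 1 + 1 from rfl, iteratedDeriv_succ, iteratedDeriv_one, hX1, hX2]
  rw [hBr, hBig.deriv, hXval, hB, hC, hM, hC.symm.trans e2, hM.symm.trans e4, e5, e4', e7]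
  linear_combination (w ^ 6 / 12) * hE (w * r + w ^ 4 * x ^ 2)
end

section
/- Let ψ : ℝ → ℝ be infinitely differentiable and satisfy the ordinary differential equation ψ'''(s) + 12·ψ'(s)·ψ(s) − s·ψ'(s) − 2·ψ(s) = 0 for all s ∈ ℝ. Define φ(x,t,r) = (t/4)^(-2/3)·ψ( (t/4)^(-1/3)·r ) for (x,t,r) ∈ ℝ × (0,∞) × ℝ (so φ is independent of x). Then φ satisfies the (r-differentiated) KP equation: ∂_r( ∂_t φ + φ·∂_r φ + (1/12)·∂_r^3 φ ) + (1/4)·∂_x^2 φ = 0 at every point of ℝ × (0,∞) × ℝ. -/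
private lemma iter_mul (n : ℕ) (c : ℝ) (f : ℝ → ℝ) (hf : ContDiff ℝ (n : ℕ∞) f) (x : ℝ) :
    iteratedDeriv n (fun z => c * f z) x = c * iteratedDeriv n f x := by
  rw [← iteratedDerivWithin_univ, ← iteratedDerivWithin_univ]
  exact iteratedDerivWithin_const_mul (Set.mem_univ x) uniqueDiffOn_univ c hf.contDiffWithinAt

/-- the self-similar ansatz `φ(x,t,r) = (t/4)^{-2/3} ψ((t/4)^{-1/3} r)`
built from a solution `ψ` of `ψ''' + 12 ψ' ψ - s ψ' - 2 ψ = 0` satisfies the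
(r-differentiated) KP equation on ℝ × (0,∞) × ℝ. -/
theorem selfSimilar_GOE_solves_KP (ψ : ℝ → ℝ)
    (hψ : ContDiff ℝ (⊤ : ℕ∞) ψ)
    (hode : ∀ s : ℝ, iteratedDeriv 3 ψ s + 12 * deriv ψ s * ψ s
      - s * deriv ψ s - 2 * ψ s = 0) :
    ∀ x t r : ℝ, 0 < t →
      kpDiff (fun _ t r =>
        (t/4) ^ (-(2:ℝ)/3) * ψ ((t/4) ^ (-(1:ℝ)/3) * r)) x t r = 0 := by
  intro x t r ht
  have hu : (0:ℝ) < t / 4 := by linarith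
  set u : ℝ := t / 4 with hu_def
  set a : ℝ := u ^ (-(2:ℝ)/3) with ha_def
  set b : ℝ := u ^ (-(1:ℝ)/3) with hb_def
  set A : ℝ := u ^ (-(5:ℝ)/3) with hA_def
  -- basic rpow identities
  have c1 : u ^ (-(2:ℝ)/3 - 1) = A := by
    rw [hA_def]; norm_num
  have c2 : a * u ^ (-(1:ℝ)/3 - 1) = A * b := by
    rw [ha_def, hb_def, hA_def, ← Real.rpow_add hu, ← Real.rpow_add hu]; norm_num
  have c3 : a * a * b = A := by
    rw [ha_def, hb_def, hA_def, ← Real.rpow_add hu, ← Real.rpow_add hu]; norm_num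
  have c4 : a * b ^ 3 = A := by
    rw [ha_def, hb_def, hA_def, ← Real.rpow_natCast (u ^ (-(1:ℝ)/3)) 3,
      ← Real.rpow_mul hu.le, ← Real.rpow_add hu]; norm_num
  have hψd : Differentiable ℝ ψ := hψ.differentiable (by simp)
  -- the inner function of r' is identically 0
  have hfun : (fun r' => deriv (fun t' => (t'/4) ^ (-(2:ℝ)/3) * ψ ((t'/4) ^ (-(1:ℝ)/3) * r')) t
      + (a * ψ (b * r')) * deriv (fun s => a * ψ (b * s)) r'
      + (1/12) * iteratedDeriv 3 (fun s => a * ψ (b * s)) r') = fun _ => (0:ℝ) := by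
    funext r'
    -- t-derivative
    have hdiv : HasDerivAt (fun t' : ℝ => t' / 4) (1/4) t := (hasDerivAt_id t).div_const 4
    have h1 : HasDerivAt (fun t' : ℝ => (t'/4) ^ (-(2:ℝ)/3))
        ((-(2:ℝ)/3 * u ^ (-(2:ℝ)/3 - 1)) * (1/4)) t := by
      exact (Real.hasDerivAt_rpow_const (x := u) (p := -(2:ℝ)/3) (Or.inl hu.ne')).comp t hdiv
    have hinner : HasDerivAt (fun t' : ℝ => (t'/4) ^ (-(1:ℝ)/3) * r')
        (((-(1:ℝ)/3 * u ^ (-(1:ℝ)/3 - 1)) * (1/4)) * r') t := by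
      exact ((Real.hasDerivAt_rpow_const (x := u) (p := -(1:ℝ)/3)
        (Or.inl hu.ne')).comp t hdiv).mul_const r'
    have h2 : HasDerivAt (fun t' : ℝ => ψ ((t'/4) ^ (-(1:ℝ)/3) * r'))
        (deriv ψ (b * r') * (((-(1:ℝ)/3 * u ^ (-(1:ℝ)/3 - 1)) * (1/4)) * r')) t := by
      exact ((hψd (b * r')).hasDerivAt).comp t hinner
    have hT : deriv (fun t' => (t'/4) ^ (-(2:ℝ)/3) * ψ ((t'/4) ^ (-(1:ℝ)/3) * r')) t
        = (-(2:ℝ)/3 * u ^ (-(2:ℝ)/3 - 1)) * (1/4) * ψ (b * r')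
          + a * (deriv ψ (b * r') * (((-(1:ℝ)/3 * u ^ (-(1:ℝ)/3 - 1)) * (1/4)) * r')) := by
      exact (h1.mul h2).deriv
    -- r-derivative
    have hR : deriv (fun s => a * ψ (b * s)) r' = a * (deriv ψ (b * r') * b) := by
      have h := (((hψd (b * r')).hasDerivAt).comp r'
          ((hasDerivAt_id r').const_mul b)).const_mul a
      simp only [Function.comp_def, mul_one] at h
      exact h.deriv
    -- third r-derivative
    have hcomp : ContDiff ℝ ((3:ℕ) : ℕ∞) (fun s : ℝ => ψ (b * s)) :=
      (hψ.of_le (by norm_cast)).comp (contDiff_const.mul contDiff_id)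
    have h3 : iteratedDeriv 3 (fun s => a * ψ (b * s)) r'
        = a * (b ^ 3 * iteratedDeriv 3 ψ (b * r')) := by
      rw [iter_mul 3 a _ hcomp, iteratedDeriv_comp_const_mul (hψ.of_le (by norm_cast)) b]
    rw [hT, hR, h3]
    have key := hode (b * r')
    set P := ψ (b * r')
    set Q := deriv ψ (b * r')
    set R := iteratedDeriv 3 ψ (b * r')
    linear_combination (-(P:ℝ)/6) * c1 + (-(Q * r')/12) * c2 + (P * Q) * c3
      + (R/12) * c4 + (A/12) * key
  -- finish
  simp only [kpDiff]
  rw [hfun, deriv_const]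
  have hx2 : iteratedDeriv 2 (fun _ : ℝ => a * ψ (b * r)) x = 0 := by
    rw [iteratedDeriv_succ, iteratedDeriv_one]
    simp
  rw [hx2]
  ring
end

section
/- Let q : ℝ → ℝ be infinitely differentiable and satisfy the Painlevé II equation q''(r) = r·q(r) + 2·q(r)^3 for all r ∈ ℝ. Define ψ(r) = (1/2)·(q'(r) − q(r)^2). Then ψ satisfies ψ'''(r) + 12·ψ'(r)·ψ(r) − r·ψ'(r) − 2·ψ(r) = 0 for all r ∈ ℝ. -/
/-- if `q` solves Painlevé II, `q'' = r q + 2 q³`, then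
`ψ = (1/2)(q' - q²)` solves `ψ''' + 12 ψ' ψ - r ψ' - 2 ψ = 0`. -/
theorem half_qprime_sub_sq_solves_GOE_ode (q : ℝ → ℝ)
    (hq : ContDiff ℝ (⊤ : ℕ∞) q)
    (hP2 : ∀ r : ℝ, deriv (deriv q) r = r * q r + 2 * q r ^ 3) :
    ∀ r : ℝ,
      iteratedDeriv 3 (fun s => (1/2) * (deriv q s - q s ^ 2)) r
        + 12 * deriv (fun s => (1/2) * (deriv q s - q s ^ 2)) r
            * ((1/2) * (deriv q r - q r ^ 2))
        - r * deriv (fun s => (1/2) * (deriv q s - q s ^ 2)) r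
        - 2 * ((1/2) * (deriv q r - q r ^ 2)) = 0 := by
  intro r
  have hd1 : Differentiable ℝ q := hq.differentiable (by simp)
  have hq' : ContDiff ℝ (⊤ : ℕ∞) (deriv q) := (contDiff_infty_iff_deriv.mp hq).2
  have hd2 : Differentiable ℝ (deriv q) := hq'.differentiable (by simp)
  set ψ : ℝ → ℝ := fun s => (1/2) * (deriv q s - q s ^ 2) with hψ
  set ψ₁ : ℝ → ℝ := fun s =>
      (1/2) * (s * q s + 2 * q s ^ 3 - 2 * q s * deriv q s) with hψ₁
  set ψ₂ : ℝ → ℝ := fun s =>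
      (1/2) * (q s + s * deriv q s + 6 * q s ^ 2 * deriv q s
        - 2 * (deriv q s) ^ 2 - 2 * s * q s ^ 2 - 4 * q s ^ 4) with hψ₂
  -- first derivative
  have hD1 : ∀ s : ℝ, HasDerivAt ψ (ψ₁ s) s := by
    intro s
    have h1 : HasDerivAt (deriv q) (deriv (deriv q) s) s := (hd2 s).hasDerivAt
    rw [hP2 s] at h1
    have h2 : HasDerivAt (fun t => q t ^ 2) ((2 : ℕ) * q s ^ 1 * deriv q s) s :=
      ((hd1 s).hasDerivAt).pow 2
    have h3 := (h1.sub h2).const_mul (1/2 : ℝ)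
    refine h3.congr_deriv ?_
    simp only [hψ₁]; push_cast; ring
  have hderivψ : deriv ψ = ψ₁ := funext fun s => (hD1 s).deriv
  -- second derivative
  have hD2 : ∀ s : ℝ, HasDerivAt ψ₁ (ψ₂ s) s := by
    intro s
    have hq2 : HasDerivAt (deriv q) (deriv (deriv q) s) s := (hd2 s).hasDerivAt
    rw [hP2 s] at hq2
    have h1 : HasDerivAt (fun t : ℝ => t * q t) (1 * q s + s * deriv q s) s :=
      (hasDerivAt_id s).mul (hd1 s).hasDerivAt
    have h2 : HasDerivAt (fun t => 2 * q t ^ 3)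
        (2 * ((3 : ℕ) * q s ^ 2 * deriv q s)) s :=
      (((hd1 s).hasDerivAt).pow 3).const_mul 2
    have h3 : HasDerivAt (fun t => 2 * q t * deriv q t)
        (2 * deriv q s * deriv q s + 2 * q s * (s * q s + 2 * q s ^ 3)) s :=
      (((hd1 s).hasDerivAt).const_mul 2).mul hq2
    have h4 := ((h1.add h2).sub h3).const_mul (1/2 : ℝ)
    refine h4.congr_deriv ?_
    simp only [hψ₂]; push_cast; ring
  have hderivψ₁ : deriv ψ₁ = ψ₂ := funext fun s => (hD2 s).deriv
  -- third derivative at r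
  have hD3 : HasDerivAt ψ₂
      ((1/2) * (deriv q r + (1 * deriv q r + r * (r * q r + 2 * q r ^ 3))
        + (6 * ((2 : ℕ) * q r ^ 1 * deriv q r) * deriv q r
           + 6 * q r ^ 2 * (r * q r + 2 * q r ^ 3))
        - 2 * ((2 : ℕ) * deriv q r ^ 1 * (r * q r + 2 * q r ^ 3))
        - (2 * q r ^ 2 + 2 * r * ((2 : ℕ) * q r ^ 1 * deriv q r))
        - 4 * ((4 : ℕ) * q r ^ 3 * deriv q r))) r := by
    have hq2 : HasDerivAt (deriv q) (deriv (deriv q) r) r := (hd2 r).hasDerivAt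
    rw [hP2 r] at hq2
    have h1 : HasDerivAt q (deriv q r) r := (hd1 r).hasDerivAt
    have h2 : HasDerivAt (fun t : ℝ => t * deriv q t)
        (1 * deriv q r + r * (r * q r + 2 * q r ^ 3)) r :=
      (hasDerivAt_id r).mul hq2
    have h3 : HasDerivAt (fun t => 6 * q t ^ 2 * deriv q t)
        (6 * ((2 : ℕ) * q r ^ 1 * deriv q r) * deriv q r
          + 6 * q r ^ 2 * (r * q r + 2 * q r ^ 3)) r :=
      ((h1.pow 2).const_mul 6).mul hq2
    have h4 : HasDerivAt (fun t => 2 * (deriv q t) ^ 2)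
        (2 * ((2 : ℕ) * deriv q r ^ 1 * (r * q r + 2 * q r ^ 3))) r :=
      (hq2.pow 2).const_mul 2
    have h5 : HasDerivAt (fun t : ℝ => 2 * t * q t ^ 2)
        (2 * q r ^ 2 + 2 * r * ((2 : ℕ) * q r ^ 1 * deriv q r)) r := by
      have := (((hasDerivAt_id r).const_mul (2 : ℝ)).mul (h1.pow 2))
      refine this.congr_deriv ?_
      simp only [id_eq, Pi.pow_apply]; push_cast; ring
    have h6 : HasDerivAt (fun t => 4 * q t ^ 4)
        (4 * ((4 : ℕ) * q r ^ 3 * deriv q r)) r :=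
      (h1.pow 4).const_mul 4
    exact ((((h1.add h2).add h3).sub h4).sub h5).sub h6 |>.const_mul (1/2 : ℝ)
  have hd3val := hD3.deriv
  have hiter : iteratedDeriv 3 ψ r = deriv ψ₂ r := by
    rw [show (3 : ℕ) = 2 + 1 from rfl, iteratedDeriv_succ,
      show (2 : ℕ) = 1 + 1 from rfl, iteratedDeriv_succ, iteratedDeriv_one,
      hderivψ, hderivψ₁]
  rw [hiter, hd3val, hderivψ, hψ₁]
  push_cast
  ring
end

section
/- Let A ⊆ ℂ be open and let γ : ℝ → ℂ be a continuously differentiable parametrization of a contour C. Let f : A × ℂ → ℂ satisfy: (1) for each t ∈ ℝ, the map z ↦ f(z, γ(t)) is analytic on A; (2) for each z ∈ A, the map t ↦ f(z, γ(t)) is continuous on ℝ; (3) for each z ∈ A there exists ρ > 0 such that the closed disc of radius ρ around z lies in A and ∫_ℝ ∫_0^{2π} |f(z + ρ·e^{iθ}, γ(t))| · ρ · |γ'(t)| dθ dt < ∞. Then the function F : A → ℂ defined by F(z) = ∫_ℝ f(z, γ(t))·γ'(t) dt is analytic on A, and its derivative is given by differentiation under the integral sign: F'(z) = ∫_ℝ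 (∂f/∂z)(z, γ(t))·γ'(t) dt for every z ∈ A. -/
open MeasureTheory Set Complex

/-- differentiation of a contour integral under the integral sign.
If `f(z,ζ)` is analytic in `z` on an open set `A`, continuous in the contour parameter,
and jointly absolutely integrable over the contour and a small circle around each
`z ∈ A`, then `F(z) = ∫_C f(z,ζ) dζ` is analytic on `A` with
`F'(z) = ∫_C ∂f/∂z (z,ζ) dζ`. -/
theorem contour_integral_differentiation (A : Set ℂ) (hA : IsOpen A)
    (γ : ℝ → ℂ) (hγ : ContDiff ℝ 1 γ)
    (f : ℂ → ℂ → ℂ)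
    (h_analytic : ∀ t : ℝ, DifferentiableOn ℂ (fun z => f z (γ t)) A)
    (h_cont : ∀ z ∈ A, Continuous fun t : ℝ => f z (γ t))
    (h_int : ∀ z ∈ A, ∃ ρ : ℝ, 0 < ρ ∧ Metric.closedBall z ρ ⊆ A ∧
      (∫⁻ t : ℝ, ∫⁻ θ in Icc (0:ℝ) (2 * Real.pi),
        ENNReal.ofReal
          (‖f (z + (ρ : ℂ) * Complex.exp (θ * Complex.I)) (γ t)‖ * ρ * ‖deriv γ t‖))
        < ⊤) :
    DifferentiableOn ℂ (fun z => ∫ t : ℝ, f z (γ t) * deriv γ t) A ∧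
      ∀ z ∈ A, deriv (fun z' => ∫ t : ℝ, f z' (γ t) * deriv γ t) z
        = ∫ t : ℝ, deriv (fun z' => f z' (γ t)) z * deriv γ t := by
  have hγ' : Continuous (deriv γ) := hγ.continuous_deriv le_rfl
  have hdiffAt : ∀ (t : ℝ) {z : ℂ}, z ∈ A → DifferentiableAt ℂ (fun z => f z (γ t)) z :=
    fun t z hz => (h_analytic t).differentiableAt (hA.mem_nhds hz)
  have two_pi_pos : (0:ℝ) < 2 * Real.pi := by positivity
  have key : ∀ z₀ ∈ A, HasDerivAt (fun z => ∫ t : ℝ, f z (γ t) * deriv γ t)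
      (∫ t : ℝ, deriv (fun z' => f z' (γ t)) z₀ * deriv γ t) z₀ := by
    intro z₀ hz₀
    obtain ⟨ρ, hρ, hball, hfin⟩ := h_int z₀ hz₀
    set c : ℝ → ℂ := circleMap z₀ ρ with hc
    have hcA : ∀ θ, c θ ∈ A := fun θ => hball (circleMap_mem_closedBall z₀ hρ.le θ)
    have hcsphere : ∀ θ, dist (c θ) z₀ = ρ := fun θ =>
      Metric.mem_sphere.mp (circleMap_mem_sphere z₀ hρ.le θ)
    have hnorm2pi : ‖((2 * (Real.pi:ℂ) * Complex.I))⁻¹‖ = (2 * Real.pi)⁻¹ := by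
      rw [norm_inv]
      congr 1
      simp [Complex.norm_I, abs_of_pos Real.pi_pos]
    -- continuity in θ
    have hθcont : ∀ t, Continuous fun θ => f (c θ) (γ t) := by
      intro t
      refine continuous_iff_continuousAt.2 fun θ => ?_
      exact ((hdiffAt t (hcA θ)).continuousAt).comp (continuous_circleMap z₀ ρ).continuousAt
    -- joint measurability
    have hjm : StronglyMeasurable (Function.uncurry fun θ t => f (c θ) (γ t)) :=
      stronglyMeasurable_uncurry_of_continuous_of_stronglyMeasurable
        (fun t => hθcont t) (fun θ => (h_cont _ (hcA θ)).stronglyMeasurable)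
    set N : ℝ → ℝ := fun t => ∫ θ in Ioc (0:ℝ) (2 * Real.pi), ‖f (c θ) (γ t)‖ with hN
    have hN_nonneg : ∀ t, 0 ≤ N t := fun t => integral_nonneg fun θ => norm_nonneg _
    have hN_meas : StronglyMeasurable N := by
      have : StronglyMeasurable (Function.uncurry fun θ t => ‖f (c θ) (γ t)‖) := hjm.norm
      exact this.integral_prod_left
    -- generic circle-integral estimate
    have circle_norm_le : ∀ (t : ℝ) (φ : ℂ → ℂ) (C : ℝ),
        Continuous (fun θ => φ (c θ)) → (∀ θ, ‖φ (c θ)‖ ≤ C * ‖f (c θ) (γ t)‖) →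
        ‖∮ ζ in C(z₀, ρ), φ ζ‖ ≤ ρ * C * N t := by
      intro t φ C hφc hφle
      have hderiv_cont : Continuous (deriv (circleMap z₀ ρ)) := by
        have : deriv (circleMap z₀ ρ) = fun θ => circleMap 0 ρ θ * Complex.I :=
          funext (deriv_circleMap z₀ ρ)
        rw [this]
        exact (continuous_circleMap 0 ρ).mul continuous_const
      have h1 : Continuous fun θ => ‖deriv (circleMap z₀ ρ) θ • φ (circleMap z₀ ρ θ)‖ :=
        (hderiv_cont.smul hφc).norm
      have h2 : Continuous fun θ => ρ * (C * ‖f (c θ) (γ t)‖) :=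
        continuous_const.mul (continuous_const.mul (hθcont t).norm)
      have hle : ∫ θ in (0:ℝ)..(2*Real.pi), ‖deriv (circleMap z₀ ρ) θ • φ (circleMap z₀ ρ θ)‖
          ≤ ∫ θ in (0:ℝ)..(2*Real.pi), ρ * (C * ‖f (c θ) (γ t)‖) := by
        refine intervalIntegral.integral_mono_on two_pi_pos.le (h1.intervalIntegrable _ _)
          (h2.intervalIntegrable _ _) fun θ _ => ?_
        rw [norm_smul, deriv_circleMap]
        have hn : ‖circleMap 0 ρ θ * Complex.I‖ = ρ := by
          simp [norm_circleMap_zero, abs_of_pos hρ]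
        rw [hn]
        exact mul_le_mul_of_nonneg_left (hφle θ) hρ.le
      have heq : ∫ θ in (0:ℝ)..(2*Real.pi), ρ * (C * ‖f (c θ) (γ t)‖) = ρ * C * N t := by
        rw [intervalIntegral.integral_of_le two_pi_pos.le, integral_const_mul,
          integral_const_mul, hN]
        ring
      rw [circleIntegral]
      exact le_trans (intervalIntegral.norm_integral_le_integral_norm two_pi_pos.le)
        (heq ▸ hle)
    -- bound on the values at z₀
    have hval : ∀ t : ℝ, ‖f z₀ (γ t)‖ ≤ (2*Real.pi)⁻¹ * N t := by
      intro t
      have hrepr := two_pi_I_inv_smul_circleIntegral_sub_inv_smul_of_differentiable_on_off_countable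
        (R := ρ) (c := z₀) (w := z₀) (f := fun z => f z (γ t)) (s := ∅) countable_empty
        (Metric.mem_ball_self hρ) ((h_analytic t).continuousOn.mono hball)
        (fun x hx => hdiffAt t (hball (Metric.ball_subset_closedBall hx.1)))
      have hrepr' : f z₀ (γ t) = (2 * (Real.pi:ℂ) * Complex.I)⁻¹ •
          ∮ ζ in C(z₀, ρ), (ζ - z₀)⁻¹ • f ζ (γ t) := hrepr.symm
      rw [hrepr', norm_smul, hnorm2pi]
      have hcont' : Continuous fun θ => (c θ - z₀)⁻¹ • f (c θ) (γ t) := by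
        refine Continuous.smul (f := fun θ => (c θ - z₀)⁻¹) (Continuous.inv₀ ?_ ?_) (hθcont t)
        · exact (continuous_circleMap z₀ ρ).sub continuous_const
        · exact fun θ => sub_ne_zero.2 (circleMap_ne_center hρ.ne')
      have hb : ∀ θ, ‖(c θ - z₀)⁻¹ • f (c θ) (γ t)‖ ≤ ρ⁻¹ * ‖f (c θ) (γ t)‖ := by
        intro θ
        rw [norm_smul, norm_inv]
        have : ‖c θ - z₀‖ = ρ := by rw [← dist_eq_norm]; exact hcsphere θ
        rw [this]
      have := circle_norm_le t (fun ζ => (ζ - z₀)⁻¹ • f ζ (γ t)) ρ⁻¹ hcont' hb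
      calc (2*Real.pi)⁻¹ * ‖∮ ζ in C(z₀, ρ), (ζ - z₀)⁻¹ • f ζ (γ t)‖
          ≤ (2*Real.pi)⁻¹ * (ρ * ρ⁻¹ * N t) := by
            exact mul_le_mul_of_nonneg_left this (by positivity)
        _ = (2*Real.pi)⁻¹ * N t := by rw [mul_inv_cancel₀ hρ.ne', one_mul]
    -- bound on the derivative on the small ball
    have hderiv_bound : ∀ t : ℝ, ∀ z ∈ Metric.ball z₀ (ρ/2),
        ‖deriv (fun z' => f z' (γ t)) z‖ ≤ (2*Real.pi)⁻¹ * (ρ * ((ρ/2)^2)⁻¹) * N t := by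
      intro t z hz
      have hzball : z ∈ Metric.ball z₀ ρ :=
        Metric.ball_subset_ball (by linarith) hz
      have hrepr := Complex.two_pi_I_inv_smul_circleIntegral_sub_sq_inv_smul_of_differentiable
        hA hball (h_analytic t) hzball
      rw [← hrepr, norm_smul, hnorm2pi]
      have hzdist : dist z z₀ < ρ/2 := Metric.mem_ball.mp hz
      have hfar : ∀ θ, ρ/2 ≤ ‖c θ - z‖ := by
        intro θ
        have h1 : dist (c θ) z₀ ≤ dist (c θ) z + dist z z₀ := dist_triangle _ _ _
        rw [hcsphere θ] at h1
        rw [← dist_eq_norm]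
        linarith
      have hne : ∀ θ, c θ - z ≠ 0 := fun θ => by
        have := hfar θ; intro h; rw [h, norm_zero] at this; linarith
      have hcont' : Continuous fun θ => ((c θ - z)^2)⁻¹ • f (c θ) (γ t) := by
        refine Continuous.smul (f := fun θ => ((c θ - z)^2)⁻¹) (Continuous.inv₀ ?_ ?_) (hθcont t)
        · exact (((continuous_circleMap z₀ ρ).sub continuous_const).pow 2)
        · exact fun θ => pow_ne_zero 2 (hne θ)
      have hb : ∀ θ, ‖((c θ - z)^2)⁻¹ • f (c θ) (γ t)‖ ≤ ((ρ/2)^2)⁻¹ * ‖f (c θ) (γ t)‖ := by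
        intro θ
        rw [norm_smul, norm_inv, norm_pow]
        refine mul_le_mul_of_nonneg_right ?_ (norm_nonneg _)
        refine inv_anti₀ (by positivity) ?_
        exact pow_le_pow_left₀ (by positivity) (hfar θ) 2
      have := circle_norm_le t (fun ζ => ((ζ - z)^2)⁻¹ • f ζ (γ t)) ((ρ/2)^2)⁻¹ hcont' hb
      calc (2*Real.pi)⁻¹ * ‖∮ ζ in C(z₀, ρ), ((ζ - z)^2)⁻¹ • f ζ (γ t)‖
          ≤ (2*Real.pi)⁻¹ * (ρ * ((ρ/2)^2)⁻¹ * N t) :=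
            mul_le_mul_of_nonneg_left this (by positivity)
        _ = (2*Real.pi)⁻¹ * (ρ * ((ρ/2)^2)⁻¹) * N t := by ring
    -- integrability of the master bound
    have hB_int : Integrable (fun t => N t * ‖deriv γ t‖) (volume : Measure ℝ) := by
      have hmeas : StronglyMeasurable fun t => N t * ‖deriv γ t‖ :=
        hN_meas.mul hγ'.norm.stronglyMeasurable
      have hre : ∀ t : ℝ, (∫⁻ θ in Icc (0:ℝ) (2*Real.pi),
          ENNReal.ofReal (‖f (z₀ + (ρ:ℂ) * Complex.exp (θ * Complex.I)) (γ t)‖ * ρ * ‖deriv γ t‖))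
          = ENNReal.ofReal ρ * ENNReal.ofReal (N t * ‖deriv γ t‖) := by
        intro t
        have hci : ∀ θ : ℝ, z₀ + (ρ:ℂ) * Complex.exp (θ * Complex.I) = c θ := fun θ => rfl
        have hcont2 : Continuous fun θ : ℝ => ‖f (c θ) (γ t)‖ * ρ * ‖deriv γ t‖ :=
          (((hθcont t).norm.mul continuous_const).mul continuous_const)
        have hint : IntegrableOn (fun θ : ℝ => ‖f (c θ) (γ t)‖ * ρ * ‖deriv γ t‖)
            (Icc (0:ℝ) (2*Real.pi)) volume := hcont2.integrableOn_Icc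
        calc (∫⁻ θ in Icc (0:ℝ) (2*Real.pi),
              ENNReal.ofReal (‖f (z₀ + (ρ:ℂ) * Complex.exp (θ * Complex.I)) (γ t)‖ * ρ * ‖deriv γ t‖))
            = ∫⁻ θ in Icc (0:ℝ) (2*Real.pi),
              ENNReal.ofReal (‖f (c θ) (γ t)‖ * ρ * ‖deriv γ t‖) := by
                exact lintegral_congr fun θ => by rw [hci]
          _ = ENNReal.ofReal (∫ θ in Icc (0:ℝ) (2*Real.pi), ‖f (c θ) (γ t)‖ * ρ * ‖deriv γ t‖) := by
                rw [← ofReal_integral_eq_lintegral_ofReal hint]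
                exact Filter.Eventually.of_forall fun θ => by positivity
          _ = ENNReal.ofReal (ρ * (N t * ‖deriv γ t‖)) := by
                rw [integral_Icc_eq_integral_Ioc]
                congr 1
                have : (fun θ => ‖f (c θ) (γ t)‖ * ρ * ‖deriv γ t‖)
                    = fun θ => ‖f (c θ) (γ t)‖ * (ρ * ‖deriv γ t‖) := by
                  funext θ; ring
                rw [this, MeasureTheory.integral_mul_const, hN]
                ring
          _ = ENNReal.ofReal ρ * ENNReal.ofReal (N t * ‖deriv γ t‖) := by
                rw [ENNReal.ofReal_mul hρ.le]
      simp only [hre] at hfin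
      rw [lintegral_const_mul' _ _ ENNReal.ofReal_ne_top] at hfin
      have hfin2 : (∫⁻ t, ENNReal.ofReal (N t * ‖deriv γ t‖)) < ⊤ := by
        rcases ENNReal.mul_lt_top_iff.mp hfin with h | h | h
        · exact h.2
        · exact absurd h (by simp [ENNReal.ofReal_eq_zero, not_le, hρ])
        · rw [h]; simp
      refine ⟨hmeas.aestronglyMeasurable, ?_⟩
      rw [hasFiniteIntegral_iff_ofReal (Filter.Eventually.of_forall fun t => mul_nonneg (hN_nonneg t) (norm_nonneg _))]
      exact hfin2
    -- measurability of F' z₀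
    have hF'_meas : AEStronglyMeasurable
        (fun t => deriv (fun z' => f z' (γ t)) z₀ * deriv γ t) (volume : Measure ℝ) := by
      have hderiv_cont : Continuous (deriv (circleMap z₀ ρ)) := by
        have : deriv (circleMap z₀ ρ) = fun θ => circleMap 0 ρ θ * Complex.I :=
          funext (deriv_circleMap z₀ ρ)
        rw [this]
        exact (continuous_circleMap 0 ρ).mul continuous_const
      have hG : StronglyMeasurable (Function.uncurry fun θ t =>
          deriv (circleMap z₀ ρ) θ • (((c θ - z₀)^2)⁻¹ • f (c θ) (γ t))) := by
        refine stronglyMeasurable_uncurry_of_continuous_of_stronglyMeasurable (fun t => ?_)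
          (fun θ => ?_)
        · refine hderiv_cont.smul (Continuous.smul (f := fun θ => ((c θ - z₀)^2)⁻¹) (Continuous.inv₀ ?_ ?_) (hθcont t))
          · exact (((continuous_circleMap z₀ ρ).sub continuous_const).pow 2)
          · exact fun θ => pow_ne_zero 2 (sub_ne_zero.2 (circleMap_ne_center hρ.ne'))
        · exact (((h_cont _ (hcA θ)).const_smul (((c θ - z₀)^2)⁻¹)).const_smul (deriv (circleMap z₀ ρ) θ)).stronglyMeasurable
      have hI : StronglyMeasurable (fun t => ∫ θ in Ioc (0:ℝ) (2*Real.pi),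
          deriv (circleMap z₀ ρ) θ • (((c θ - z₀)^2)⁻¹ • f (c θ) (γ t))) :=
        hG.integral_prod_left
      have heq : (fun t => deriv (fun z' => f z' (γ t)) z₀ * deriv γ t) = fun t =>
          ((2 * (Real.pi:ℂ) * Complex.I)⁻¹ * ∫ θ in Ioc (0:ℝ) (2*Real.pi),
            deriv (circleMap z₀ ρ) θ • (((c θ - z₀)^2)⁻¹ • f (c θ) (γ t))) * deriv γ t := by
        funext t
        have hrepr := Complex.two_pi_I_inv_smul_circleIntegral_sub_sq_inv_smul_of_differentiable
          hA hball (h_analytic t) (Metric.mem_ball_self hρ)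
        rw [← hrepr, circleIntegral, intervalIntegral.integral_of_le two_pi_pos.le, smul_eq_mul]
      rw [heq]
      exact ((hI.const_mul _).mul hγ'.stronglyMeasurable).aestronglyMeasurable
    -- main application
    have hρ2 : (0:ℝ) < ρ/2 := by positivity
    have hF_meas : ∀ᶠ z in nhds z₀, AEStronglyMeasurable
        (fun t => f z (γ t) * deriv γ t) (volume : Measure ℝ) := by
      filter_upwards [hA.eventually_mem hz₀] with z hzA
      exact ((h_cont z hzA).mul hγ').aestronglyMeasurable
    have hF_int : Integrable (fun t => f z₀ (γ t) * deriv γ t) (volume : Measure ℝ) := by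
      refine (hB_int.const_mul ((2*Real.pi)⁻¹)).mono'
        (((h_cont z₀ hz₀).mul hγ').aestronglyMeasurable)
        (Filter.Eventually.of_forall fun t => ?_)
      rw [norm_mul]
      calc ‖f z₀ (γ t)‖ * ‖deriv γ t‖ ≤ ((2*Real.pi)⁻¹ * N t) * ‖deriv γ t‖ :=
            mul_le_mul_of_nonneg_right (hval t) (norm_nonneg _)
        _ = (2*Real.pi)⁻¹ * (N t * ‖deriv γ t‖) := by ring
    have h_bound : ∀ᵐ t : ℝ, ∀ z ∈ Metric.ball z₀ (ρ/2),
        ‖deriv (fun z' => f z' (γ t)) z * deriv γ t‖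
          ≤ (2*Real.pi)⁻¹ * (ρ * ((ρ/2)^2)⁻¹) * (N t * ‖deriv γ t‖) := by
      refine Filter.Eventually.of_forall fun t z hz => ?_
      rw [norm_mul]
      calc ‖deriv (fun z' => f z' (γ t)) z‖ * ‖deriv γ t‖
          ≤ ((2*Real.pi)⁻¹ * (ρ * ((ρ/2)^2)⁻¹) * N t) * ‖deriv γ t‖ :=
            mul_le_mul_of_nonneg_right (hderiv_bound t z hz) (norm_nonneg _)
        _ = (2*Real.pi)⁻¹ * (ρ * ((ρ/2)^2)⁻¹) * (N t * ‖deriv γ t‖) := by ring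
    have h_diff : ∀ᵐ t : ℝ, ∀ z ∈ Metric.ball z₀ (ρ/2),
        HasDerivAt (fun z' => f z' (γ t) * deriv γ t)
          (deriv (fun z' => f z' (γ t)) z * deriv γ t) z := by
      refine Filter.Eventually.of_forall fun t z hz => ?_
      have hzA : z ∈ A := hball (Metric.ball_subset_closedBall
        (Metric.ball_subset_ball (by linarith) hz))
      exact ((hdiffAt t hzA).hasDerivAt).mul_const _
    have := hasDerivAt_integral_of_dominated_loc_of_deriv_le (𝕜 := ℂ)
      (F := fun z t => f z (γ t) * deriv γ t)
      (F' := fun z t => deriv (fun z' => f z' (γ t)) z * deriv γ t)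
      (bound := fun t => (2*Real.pi)⁻¹ * (ρ * ((ρ/2)^2)⁻¹) * (N t * ‖deriv γ t‖))
      (Metric.ball_mem_nhds z₀ hρ2) hF_meas hF_int hF'_meas h_bound
      (hB_int.const_mul _) h_diff
    exact this.2
  refine ⟨fun z hz => ((key z hz).differentiableAt).differentiableWithinAt,
    fun z hz => (key z hz).deriv⟩
end

section
/- Let u, a, b, y be as in the Painlevé II system below. Then for all (x,w) ∈ ℝ × ℝ: ∂_x y(x,w) = a(x,w)·a(x,−w). -/
/-- first x-derivative of y in the Painlevé II system: ∂ₓy = a(x,w)·a(x,−w). -/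
theorem painleveII_y_deriv_x_one
    (u : ℝ → ℝ) (a b y : ℝ → ℝ → ℝ)
    (hu : ContDiff ℝ (⊤ : ℕ∞) u)
    (hP2 : ∀ x : ℝ, deriv (deriv u) x = 2 * u x ^ 3 + x * u x)
    (ha : ContDiff ℝ (⊤ : ℕ∞) (fun p : ℝ × ℝ => a p.1 p.2))
    (hb : ContDiff ℝ (⊤ : ℕ∞) (fun p : ℝ × ℝ => b p.1 p.2))
    (hax : ∀ x w : ℝ, deriv (fun x' => a x' w) x = u x * b x w)
    (hbx : ∀ x w : ℝ, deriv (fun x' => b x' w) x = u x * a x w - 2 * w * b x w)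
    (haw : ∀ x w : ℝ, deriv (fun w' => a x w') w
      = 2 * u x ^ 2 * a x w - (4 * w * u x + 2 * deriv u x) * b x w)
    (hbw : ∀ x w : ℝ, deriv (fun w' => b x w') w
      = (-(4 * w * u x) + 2 * deriv u x) * a x w
        + (8 * w ^ 2 - 2 * x - 2 * u x ^ 2) * b x w)
    (hab : ∀ x w : ℝ, a x w = -b x (-w) * Real.exp (8 * w ^ 3 / 3 - 2 * w * x))
    (hba : ∀ x w : ℝ, b x w = -a x (-w) * Real.exp (8 * w ^ 3 / 3 - 2 * w * x))
    (hy : ∀ x w : ℝ, y x w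
      = (2 * u x ^ 2 + x - 4 * w ^ 2) * a x w * a x (-w)
        - (deriv u x + 2 * w * u x) * b x w * a x (-w)
        - (deriv u x - 2 * w * u x) * a x w * b x (-w)) :
    ∀ x w : ℝ, deriv (fun x' => y x' w) x = a x w * a x (-w) := by
  intro x w
  have key : a x w * a x (-w) = b x w * b x (-w) := by
    rw [hab x w, hba x w]; ring
  have hud : Differentiable ℝ u := hu.differentiable (by simp)
  have hu'd : Differentiable ℝ (deriv u) := by
    have h := hu.iterate_deriv 1
    simpa using h.differentiable (by simp)
  have hU : HasDerivAt u (deriv u x) x := hud.differentiableAt.hasDerivAt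
  have hU' : HasDerivAt (deriv u) (2 * u x ^ 3 + x * u x) x := by
    have h := (hu'd.differentiableAt (x := x)).hasDerivAt
    rwa [hP2 x] at h
  have hA : ∀ v : ℝ, HasDerivAt (fun x' => a x' v) (u x * b x v) x := by
    intro v
    have hd : Differentiable ℝ (fun x' => a x' v) :=
      (ha.differentiable (by simp)).comp (differentiable_id.prodMk (differentiable_const v))
    have h := (hd x).hasDerivAt
    rwa [hax x v] at h
  have hB : ∀ v : ℝ, HasDerivAt (fun x' => b x' v) (u x * a x v - 2 * v * b x v) x := by
    intro v
    have hd : Differentiable ℝ (fun x' => b x' v) :=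
      (hb.differentiable (by simp)).comp (differentiable_id.prodMk (differentiable_const v))
    have h := (hd x).hasDerivAt
    rwa [hbx x v] at h
  have h1 := (((hU.pow 2).const_mul 2).add (hasDerivAt_id' (x := x))).sub_const (4 * w ^ 2)
  have hT1 := (h1.mul (hA w)).mul (hA (-w))
  have hT2 := ((hU'.add (hU.const_mul (2 * w))).mul (hB w)).mul (hA (-w))
  have hT3 := ((hU'.sub (hU.const_mul (2 * w))).mul (hA w)).mul (hB (-w))
  have H0 := (hT1.sub hT2).sub hT3
  have hfun : (fun x' => y x' w) = (fun x' =>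
      (2 * u x' ^ 2 + x' - 4 * w ^ 2) * a x' w * a x' (-w)
      - (deriv u x' + 2 * w * u x') * b x' w * a x' (-w)
      - (deriv u x' - 2 * w * u x') * a x' w * b x' (-w)) := funext fun t => hy t w
  have hde : deriv (fun x' =>
      (2 * u x' ^ 2 + x' - 4 * w ^ 2) * a x' w * a x' (-w)
      - (deriv u x' + 2 * w * u x') * b x' w * a x' (-w)
      - (deriv u x' - 2 * w * u x') * a x' w * b x' (-w)) x = _ := H0.deriv
  simp only [Pi.add_apply, Pi.sub_apply, Pi.mul_apply, Pi.pow_apply, Nat.cast_ofNat] at hde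
  rw [hfun, hde]
  linear_combination (2 * u x * deriv u x) * key
end

section
/- Let u, a, b, y be as in the Painlevé II system below. Then for all (x,w) ∈ ℝ × ℝ: ∂_w y(x,w) = −8w·a(x,w)·a(x,−w) + 2·u(x)·a(x,w)·b(x,−w) − 2·u(x)·b(x,w)·a(x,−w). -/
/-- first w-derivative of y in the Painlevé II system. -/
theorem painleveII_y_deriv_w_one
    (u : ℝ → ℝ) (a b y : ℝ → ℝ → ℝ)
    (hu : ContDiff ℝ (⊤ : ℕ∞) u)
    (hP2 : ∀ x : ℝ, deriv (deriv u) x = 2 * u x ^ 3 + x * u x)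
    (ha : ContDiff ℝ (⊤ : ℕ∞) (fun p : ℝ × ℝ => a p.1 p.2))
    (hb : ContDiff ℝ (⊤ : ℕ∞) (fun p : ℝ × ℝ => b p.1 p.2))
    (hax : ∀ x w : ℝ, deriv (fun x' => a x' w) x = u x * b x w)
    (hbx : ∀ x w : ℝ, deriv (fun x' => b x' w) x = u x * a x w - 2 * w * b x w)
    (haw : ∀ x w : ℝ, deriv (fun w' => a x w') w
      = 2 * u x ^ 2 * a x w - (4 * w * u x + 2 * deriv u x) * b x w)
    (hbw : ∀ x w : ℝ, deriv (fun w' => b x w') w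
      = (-(4 * w * u x) + 2 * deriv u x) * a x w
        + (8 * w ^ 2 - 2 * x - 2 * u x ^ 2) * b x w)
    (hab : ∀ x w : ℝ, a x w = -b x (-w) * Real.exp (8 * w ^ 3 / 3 - 2 * w * x))
    (hba : ∀ x w : ℝ, b x w = -a x (-w) * Real.exp (8 * w ^ 3 / 3 - 2 * w * x))
    (hy : ∀ x w : ℝ, y x w
      = (2 * u x ^ 2 + x - 4 * w ^ 2) * a x w * a x (-w)
        - (deriv u x + 2 * w * u x) * b x w * a x (-w)
        - (deriv u x - 2 * w * u x) * a x w * b x (-w)) :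
    ∀ x w : ℝ, deriv (fun w' => y x w') w
      = -(8 * w) * a x w * a x (-w) + 2 * u x * a x w * b x (-w)
        - 2 * u x * b x w * a x (-w) := by
  intro x w
  have hadA : Differentiable ℝ (fun w' => a x w') :=
    (ha.differentiable (by simp)).comp (f := fun w' => (x, w')) (Differentiable.prodMk (differentiable_const x) differentiable_id)
  have hadB : Differentiable ℝ (fun w' => b x w') :=
    (hb.differentiable (by simp)).comp (f := fun w' => (x, w')) (Differentiable.prodMk (differentiable_const x) differentiable_id)
  have hA : HasDerivAt (fun w' => a x w') (deriv (fun w' => a x w') w) w :=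
    (hadA w).hasDerivAt
  have hB : HasDerivAt (fun w' => b x w') (deriv (fun w' => b x w') w) w :=
    (hadB w).hasDerivAt
  have hAm : HasDerivAt (fun w' => a x (-w')) (deriv (fun w' => a x w') (-w) * (-1)) w :=
    ((hadA (-w)).hasDerivAt).comp w (hasDerivAt_neg w)
  have hBm : HasDerivAt (fun w' => b x (-w')) (deriv (fun w' => b x w') (-w) * (-1)) w :=
    ((hadB (-w)).hasDerivAt).comp w (hasDerivAt_neg w)
  have hc1 : HasDerivAt (fun w' : ℝ => 2 * u x ^ 2 + x - 4 * w' ^ 2)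
      (-(4 * ((2 : ℕ) * w ^ 1))) w :=
    ((hasDerivAt_pow 2 w).const_mul 4).const_sub (2 * u x ^ 2 + x)
  have hc2 : HasDerivAt (fun w' : ℝ => deriv u x + 2 * w' * u x) (2 * 1 * u x) w :=
    (((hasDerivAt_id w).const_mul 2).mul_const (u x)).const_add (deriv u x)
  have hc3 : HasDerivAt (fun w' : ℝ => deriv u x - 2 * w' * u x) (-(2 * 1 * u x)) w :=
    (((hasDerivAt_id w).const_mul 2).mul_const (u x)).const_sub (deriv u x)
  have hbig : HasDerivAt (fun w' =>
      (2 * u x ^ 2 + x - 4 * w' ^ 2) * a x w' * a x (-w')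
        - (deriv u x + 2 * w' * u x) * b x w' * a x (-w')
        - (deriv u x - 2 * w' * u x) * a x w' * b x (-w'))
      (((-(4 * ((2 : ℕ) * w ^ 1)) * a x w + (2 * u x ^ 2 + x - 4 * w ^ 2)
          * deriv (fun w' => a x w') w) * a x (-w)
        + (2 * u x ^ 2 + x - 4 * w ^ 2) * a x w * (deriv (fun w' => a x w') (-w) * (-1)))
      - ((2 * 1 * u x * b x w + (deriv u x + 2 * w * u x)
          * deriv (fun w' => b x w') w) * a x (-w)
        + (deriv u x + 2 * w * u x) * b x w * (deriv (fun w' => a x w') (-w) * (-1)))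
      - ((-(2 * 1 * u x) * a x w + (deriv u x - 2 * w * u x)
          * deriv (fun w' => a x w') w) * b x (-w)
        + (deriv u x - 2 * w * u x) * a x w * (deriv (fun w' => b x w') (-w) * (-1)))) w :=
    (((hc1.mul hA).mul hAm).sub ((hc2.mul hB).mul hAm)).sub ((hc3.mul hA).mul hBm)
  have hyfun : (fun w' => y x w') = (fun w' =>
      (2 * u x ^ 2 + x - 4 * w' ^ 2) * a x w' * a x (-w')
        - (deriv u x + 2 * w' * u x) * b x w' * a x (-w')
        - (deriv u x - 2 * w' * u x) * a x w' * b x (-w')) :=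
    funext fun w' => hy x w'
  rw [hyfun, hbig.deriv, haw x w, haw x (-w), hbw x w, hbw x (-w)]
  push_cast
  ring
end

section
/- Let u, a, b, y be as in the Painlevé II system below. Then for all (x,w) ∈ ℝ × ℝ: ∂_w^2 y(x,w) = (−8 − 16·u(x)·u'(x))·a(x,w)·a(x,−w) + (16w^2·u(x) − 16w·u'(x) + 8·u(x)^3 + 4·u(x)·x)·a(x,w)·b(x,−w) + (16w^2·u(x) + 16w·u'(x) + 8·u(x)^3 + 4·u(x)·x)·b(x,w)·a(x,−w). -/
/-- second w-derivative of y in the Painlevé II system. -/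
theorem painleveII_y_deriv_w_two
    (u : ℝ → ℝ) (a b y : ℝ → ℝ → ℝ)
    (hu : ContDiff ℝ (⊤ : ℕ∞) u)
    (hP2 : ∀ x : ℝ, deriv (deriv u) x = 2 * u x ^ 3 + x * u x)
    (ha : ContDiff ℝ (⊤ : ℕ∞) (fun p : ℝ × ℝ => a p.1 p.2))
    (hb : ContDiff ℝ (⊤ : ℕ∞) (fun p : ℝ × ℝ => b p.1 p.2))
    (hax : ∀ x w : ℝ, deriv (fun x' => a x' w) x = u x * b x w)
    (hbx : ∀ x w : ℝ, deriv (fun x' => b x' w) x = u x * a x w - 2 * w * b x w)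
    (haw : ∀ x w : ℝ, deriv (fun w' => a x w') w
      = 2 * u x ^ 2 * a x w - (4 * w * u x + 2 * deriv u x) * b x w)
    (hbw : ∀ x w : ℝ, deriv (fun w' => b x w') w
      = (-(4 * w * u x) + 2 * deriv u x) * a x w
        + (8 * w ^ 2 - 2 * x - 2 * u x ^ 2) * b x w)
    (hab : ∀ x w : ℝ, a x w = -b x (-w) * Real.exp (8 * w ^ 3 / 3 - 2 * w * x))
    (hba : ∀ x w : ℝ, b x w = -a x (-w) * Real.exp (8 * w ^ 3 / 3 - 2 * w * x))
    (hy : ∀ x w : ℝ, y x w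
      = (2 * u x ^ 2 + x - 4 * w ^ 2) * a x w * a x (-w)
        - (deriv u x + 2 * w * u x) * b x w * a x (-w)
        - (deriv u x - 2 * w * u x) * a x w * b x (-w)) :
    ∀ x w : ℝ, iteratedDeriv 2 (fun w' => y x w') w
      = (-8 - 16 * u x * deriv u x) * a x w * a x (-w)
        + (16 * w ^ 2 * u x - 16 * w * deriv u x + 8 * u x ^ 3 + 4 * u x * x)
            * a x w * b x (-w)
        + (16 * w ^ 2 * u x + 16 * w * deriv u x + 8 * u x ^ 3 + 4 * u x * x)
            * b x w * a x (-w) :=  by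
  intro x w0
  -- differentiability of slices
  have hadiff : Differentiable ℝ (fun q : ℝ × ℝ => a q.1 q.2) := ha.differentiable (by simp)
  have hbdiff : Differentiable ℝ (fun q : ℝ × ℝ => b q.1 q.2) := hb.differentiable (by simp)
  have hAd : Differentiable ℝ (fun w' : ℝ => a x w') :=
    show Differentiable ℝ ((fun q : ℝ × ℝ => a q.1 q.2) ∘ (fun w' : ℝ => (x, w'))) from
      hadiff.comp ((differentiable_const x).prodMk differentiable_id)
  have hBd : Differentiable ℝ (fun w' : ℝ => b x w') :=
    show Differentiable ℝ ((fun q : ℝ × ℝ => b q.1 q.2) ∘ (fun w' : ℝ => (x, w'))) from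
      hbdiff.comp ((differentiable_const x).prodMk differentiable_id)
  have hA : ∀ w : ℝ, HasDerivAt (fun w' => a x w')
      (2 * u x ^ 2 * a x w - (4 * w * u x + 2 * deriv u x) * b x w) w := by
    intro w
    have h := (hAd w).hasDerivAt
    rwa [haw x w] at h
  have hB : ∀ w : ℝ, HasDerivAt (fun w' => b x w')
      ((-(4 * w * u x) + 2 * deriv u x) * a x w
        + (8 * w ^ 2 - 2 * x - 2 * u x ^ 2) * b x w) w := by
    intro w
    have h := (hBd w).hasDerivAt
    rwa [hbw x w] at h
  have hC : ∀ w : ℝ, HasDerivAt (fun w' => a x (-w'))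
      ((2 * u x ^ 2 * a x (-w) - (4 * (-w) * u x + 2 * deriv u x) * b x (-w)) * (-1)) w := by
    intro w
    exact (hA (-w)).comp w (hasDerivAt_neg w)
  have hD : ∀ w : ℝ, HasDerivAt (fun w' => b x (-w'))
      (((-(4 * (-w) * u x) + 2 * deriv u x) * a x (-w)
        + (8 * (-w) ^ 2 - 2 * x - 2 * u x ^ 2) * b x (-w)) * (-1)) w := by
    intro w
    exact (hB (-w)).comp w (hasDerivAt_neg w)
  -- key identity
  have hkey : ∀ w : ℝ, a x w * a x (-w) = b x w * b x (-w) := by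
    intro w
    rw [hab x w, hba x w]
    ring
  -- first derivative
  have hY1 : ∀ w : ℝ, HasDerivAt (fun w' => y x w')
      (-8 * w * (a x w * a x (-w)) - 2 * u x * (b x w * a x (-w))
        + 2 * u x * (a x w * b x (-w))) w := by
    intro w
    have hfun : (fun w' => y x w')
        = fun w' => (2 * u x ^ 2 + x - 4 * w' ^ 2) * a x w' * a x (-w')
          - (deriv u x + 2 * w' * u x) * b x w' * a x (-w')
          - (deriv u x - 2 * w' * u x) * a x w' * b x (-w') := funext (hy x)
    rw [hfun]
    have hc1 : HasDerivAt (fun w' : ℝ => 2 * u x ^ 2 + x - 4 * w' ^ 2)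
        (-(4 * (2 * w ^ 1))) w := by
      simpa using ((hasDerivAt_pow 2 w).const_mul 4).const_sub (2 * u x ^ 2 + x)
    have hc2 : HasDerivAt (fun w' : ℝ => deriv u x + 2 * w' * u x) (2 * u x) w := by
      have := (((hasDerivAt_id w).const_mul 2).mul_const (u x)).const_add (deriv u x)
      simpa using this
    have hc3 : HasDerivAt (fun w' : ℝ => deriv u x - 2 * w' * u x) (-(2 * u x)) w := by
      have := (((hasDerivAt_id w).const_mul 2).mul_const (u x)).const_sub (deriv u x)
      simpa using this
    have h := (((hc1.mul (hA w)).mul (hC w)).sub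
        ((hc2.mul (hB w)).mul (hC w))).sub ((hc3.mul (hA w)).mul (hD w))
    convert h using 1
    · rfl
    · rfl
    · rfl
    simp only [Pi.mul_apply]
    ring
  -- rewrite iterated derivative
  rw [iteratedDeriv_succ, iteratedDeriv_one]
  have hd1 : deriv (fun w' => y x w')
      = fun w => -8 * w * (a x w * a x (-w)) - 2 * u x * (b x w * a x (-w))
        + 2 * u x * (a x w * b x (-w)) := funext fun w => (hY1 w).deriv
  rw [hd1]
  -- second derivative
  have hc0 : HasDerivAt (fun w' : ℝ => -8 * w') (-8 : ℝ) w0 := by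
    simpa using (hasDerivAt_id w0).const_mul (-8 : ℝ)
  have h := ((hc0.mul ((hA w0).mul (hC w0))).sub
      (((hB w0).mul (hC w0)).const_mul (2 * u x))).add
      (((hA w0).mul (hD w0)).const_mul (2 * u x))
  have := h.deriv
  rw [show (fun w => -8 * w * (a x w * a x (-w)) - 2 * u x * (b x w * a x (-w)) + 2 * u x * (a x w * b x (-w))) = ((fun w' => -8 * w') * ((fun w' => a x w') * fun w' => a x (-w')) - fun y => 2 * u x * ((fun w' => b x w') * fun w' => a x (-w')) y) + fun y => 2 * u x * ((fun w' => a x w') * fun w' => b x (-w')) y from rfl, this]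
  simp only [Pi.mul_apply]
  have hk := hkey w0
  linear_combination (8 * u x * deriv u x) * hk
end
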